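/- arXiv:1705.07160 — 2 statements merged into one kernel-verified Lean document; each statement's English description precedes it below -/
import Mathlib

section
/- Let n, d ≥ 2 and let C be a 2d-mode complex tensor on ℂ^n lying in S^d ℂ^n ⊗ S^d ℂ^n (symmetric separately in the first d and last d indices). Then the spectral norm satisfies ‖C‖_{∞,ℂ} = max{ Re⟨C, (⊗^d x)⊗(⊗^d y)⟩ : x,y ∈ ℂ^n, ‖x‖ = ‖y‖ = 1 }. -/
open scoped ComplexOrder

noncomputable section


/-- The Euclidean norm of a vector in `ℂ^k`. -/
def vnorm {k : ℕ} (x : Fin k → ℂ) : ℝ :=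
  Real.sqrt (∑ i, ‖x i‖ ^ 2)

/-- A symmetric `d`-mode tensor on `ℂ^n`. -/
def IsSymT {d n : ℕ} (S : (Fin d → Fin n) → ℂ) : Prop :=
  ∀ (ω : Equiv.Perm (Fin d)) (i : Fin d → Fin n), S (i ∘ ω) = S i

/-- A hermitian `2d`-mode tensor on `ℂ^n`. -/
def IsHermT {d n : ℕ} (A : (Fin d → Fin n) → (Fin d → Fin n) → ℂ) : Prop :=
  ∀ p q, A q p = (starRingEnd ℂ) (A p q)

/-- A bisymmetric `2d`-mode tensor on `ℂ^n`: symmetric separately in the first `d`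
and in the last `d` indices. -/
def IsBisymT {d n : ℕ} (A : (Fin d → Fin n) → (Fin d → Fin n) → ℂ) : Prop :=
  ∀ (σ τ : Equiv.Perm (Fin d)) (p q : Fin d → Fin n), A (p ∘ σ) (q ∘ τ) = A p q

/-- The trace of a `2d`-mode tensor, viewed as a matrix. -/
def traceT {d n : ℕ} (A : (Fin d → Fin n) → (Fin d → Fin n) → ℂ) : ℂ :=
  ∑ p, A p p

/-- The spectral norm of a `2d`-mode tensor `A` on `ℂ^n`:
`max {|⟨A, x₁⊗⋯⊗x_d⊗y₁⊗⋯⊗y_d⟩| : ‖x_j‖ = ‖y_j‖ = 1}`. -/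
def specNorm2 {d n : ℕ} (A : (Fin d → Fin n) → (Fin d → Fin n) → ℂ) : ℝ :=
  sSup {r : ℝ | ∃ (x y : Fin d → Fin n → ℂ),
    (∀ j, vnorm (x j) = 1) ∧ (∀ j, vnorm (y j) = 1) ∧
    r = ‖(∑ p, ∑ q, A p q *
      (starRingEnd ℂ) ((∏ j, x j (p j)) * (∏ j, y j (q j))))‖}

/-- The nuclear norm of a `2d`-mode tensor `A` on `ℂ^n`. -/
def nucNorm2 {d n : ℕ} (A : (Fin d → Fin n) → (Fin d → Fin n) → ℂ) : ℝ :=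
  sInf {r : ℝ | ∃ (m : ℕ) (x y : Fin m → Fin d → Fin n → ℂ),
    A = (fun p q => ∑ i, (∏ j, x i j (p j)) * (∏ j, y i j (q j))) ∧
    r = ∑ i, (∏ j, vnorm (x i j)) * (∏ j, vnorm (y i j))}

/-- A density tensor: hermitian positive semidefinite with trace one. -/
def IsDensity {d n : ℕ} (A : (Fin d → Fin n) → (Fin d → Fin n) → ℂ) : Prop :=
  (Matrix.of A).PosSemidef ∧ traceT A = 1

/-- A separable (density) tensor. -/
def Separable {d n : ℕ} (A : (Fin d → Fin n) → (Fin d → Fin n) → ℂ) : Prop :=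
  ∃ (r : ℕ) (p : Fin r → ℝ) (x : Fin r → Fin d → Fin n → ℂ),
    (∀ i j, vnorm (x i j) = 1) ∧ (∀ i, 0 ≤ p i) ∧ (∑ i, p i) = 1 ∧
    A = fun a b => ∑ i, (p i : ℂ) *
      ((∏ j, x i j (a j)) * ∏ j, (starRingEnd ℂ) (x i j (b j)))

open Complex Finset Function
open ComplexConjugate

namespace Stmt10Aux

variable {n d : ℕ}


variable {n d : ℕ}

/-- squared norm -/
def nsq {n : ℕ} (a : Fin n → ℂ) : ℝ := ∑ k, Complex.normSq (a k)

/-- inner product, linear in first, conj-linear in second -/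
def ip {n : ℕ} (a b : Fin n → ℂ) : ℂ := ∑ k, a k * conj (b k)

def sing {n : ℕ} (k : Fin n) : Fin n → ℂ := Pi.single k 1

def G (C : (Fin d → Fin n) → (Fin d → Fin n) → ℂ) (x y : Fin d → Fin n → ℂ) : ℂ :=
  ∑ p, ∑ q, C p q * (starRingEnd ℂ) ((∏ j, x j (p j)) * (∏ j, y j (q j)))

lemma vnorm_eq (a : Fin n → ℂ) : vnorm a = Real.sqrt (nsq a) := by
  unfold vnorm nsq
  congr 1
  exact Finset.sum_congr rfl fun k _ => (Complex.sq_norm (a k)).symm ▸ rfl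

lemma nsq_nonneg (a : Fin n → ℂ) : 0 ≤ nsq a :=
  Finset.sum_nonneg fun k _ => Complex.normSq_nonneg _

lemma vnorm_one_iff (a : Fin n → ℂ) : vnorm a = 1 ↔ nsq a = 1 := by
  rw [vnorm_eq]
  constructor
  · intro h
    have := congrArg (fun t => t ^ 2) h
    simpa [Real.sq_sqrt (nsq_nonneg a)] using this
  · intro h; rw [h, Real.sqrt_one]

lemma nsq_smul (c : ℂ) (a : Fin n → ℂ) :
    nsq (fun k => c * a k) = Complex.normSq c * nsq a := by
  unfold nsq
  rw [Finset.mul_sum]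
  exact Finset.sum_congr rfl fun k _ => by rw [Complex.normSq_mul]

lemma nsq_add (a b : Fin n → ℂ) :
    nsq (fun k => a k + b k) = nsq a + 2 * (ip a b).re + nsq b := by
  unfold nsq ip
  rw [Complex.re_sum, Finset.mul_sum, ← Finset.sum_add_distrib, ← Finset.sum_add_distrib]
  refine Finset.sum_congr rfl fun k _ => ?_
  have := Complex.normSq_add (a k) (b k)
  rw [this]; ring

lemma nsq_sub (a b : Fin n → ℂ) :
    nsq (fun k => a k - b k) = nsq a - 2 * (ip a b).re + nsq b := by
  have h := nsq_add a (fun k => -(b k))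
  have h1 : (fun k => a k + -(b k)) = fun k => a k - b k := by funext k; ring
  have h2 : nsq (fun k => -(b k)) = nsq b := by
    unfold nsq; exact Finset.sum_congr rfl fun k _ => by rw [Complex.normSq_neg]
  have h3 : ip a (fun k => -(b k)) = -(ip a b) := by
    unfold ip; rw [← Finset.sum_neg_distrib]
    exact Finset.sum_congr rfl fun k _ => by rw [map_neg]; ring
  rw [h1, h2, h3] at h
  rw [h]; simp; ring

lemma nsq_eq_zero_iff (a : Fin n → ℂ) : nsq a = 0 ↔ a = 0 := by
  unfold nsq
  rw [Finset.sum_eq_zero_iff_of_nonneg fun k _ => Complex.normSq_nonneg _]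
  constructor
  · intro h; funext k; exact Complex.normSq_eq_zero.mp (h k (Finset.mem_univ k))
  · intro h k _; rw [congrFun h k]; simp

lemma ip_self (a : Fin n → ℂ) : ip a a = (nsq a : ℂ) := by
  unfold ip nsq
  push_cast
  exact Finset.sum_congr rfl fun k _ => Complex.mul_conj (a k)

lemma coord_le_one {a : Fin n → ℂ} (h : nsq a = 1) (k : Fin n) : ‖a k‖ ≤ 1 := by
  have h1 : Complex.normSq (a k) ≤ 1 := by
    rw [← h]
    exact Finset.single_le_sum (fun k _ => Complex.normSq_nonneg _) (Finset.mem_univ k)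
  have := Complex.sq_norm (a k)
  nlinarith [norm_nonneg (a k)]


lemma prod_update (x : Fin d → Fin n → ℂ) (i : Fin d) (b : Fin n → ℂ) (p : Fin d → Fin n) :
    (∏ j, Function.update x i b j (p j))
      = b (p i) * ∏ j ∈ Finset.univ \ {i}, x j (p j) := by
  have h : ∀ j, Function.update x i b j (p j)
      = Function.update (fun j' => x j' (p j')) i (b (p i)) j := by
    intro j
    by_cases hj : j = i
    · subst hj; simp
    · simp [Function.update_apply, hj]
  simp only [h]
  exact Finset.prod_update_of_mem (Finset.mem_univ i) _ _

lemma G_update_x (C : (Fin d → Fin n) → (Fin d → Fin n) → ℂ) (x y : Fin d → Fin n → ℂ)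
    (i : Fin d) (b : Fin n → ℂ) :
    G C (Function.update x i b) y
      = ∑ k, conj (b k) * G C (Function.update x i (sing k)) y := by
  have step1 : G C (Function.update x i b) y
      = ∑ p, ∑ q, ∑ k, (if p i = k then conj (b k) * (C p q * (starRingEnd ℂ)
          ((∏ j ∈ Finset.univ \ {i}, x j (p j)) * ∏ j, y j (q j))) else 0) := by
    unfold G
    refine Finset.sum_congr rfl fun p _ => Finset.sum_congr rfl fun q _ => ?_
    rw [Finset.sum_ite_eq]
    simp only [Finset.mem_univ, if_true]
    rw [prod_update]
    simp only [map_mul]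
    ring
  rw [step1]
  have step2 : ∀ (p q : Fin d → Fin n) (k : Fin n),
      (if p i = k then conj (b k) * (C p q * (starRingEnd ℂ)
          ((∏ j ∈ Finset.univ \ {i}, x j (p j)) * ∏ j, y j (q j))) else 0)
      = conj (b k) * (C p q * (starRingEnd ℂ)
          ((∏ j, Function.update x i (sing k) j (p j)) * ∏ j, y j (q j))) := by
    intro p q k
    rw [prod_update]
    have : (sing k) (p i) = if p i = k then 1 else 0 := by
      simp [sing, Pi.single_apply]
    rw [this]
    by_cases h : p i = k <;> simp [h]
  simp only [step2]
  have col : ∀ k, conj (b k) * G C (Function.update x i (sing k)) y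
      = ∑ p, ∑ q, conj (b k) * (C p q * (starRingEnd ℂ)
          ((∏ j, Function.update x i (sing k) j (p j)) * ∏ j, y j (q j))) := by
    intro k
    unfold G
    rw [Finset.mul_sum]
    exact Finset.sum_congr rfl fun p _ => Finset.mul_sum _ _ _
  simp only [col]
  calc ∑ p, ∑ q, ∑ k, conj (b k) * (C p q * (starRingEnd ℂ)
          ((∏ j, Function.update x i (sing k) j (p j)) * ∏ j, y j (q j)))
      = ∑ p, ∑ k, ∑ q, conj (b k) * (C p q * (starRingEnd ℂ)
          ((∏ j, Function.update x i (sing k) j (p j)) * ∏ j, y j (q j))) :=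
        Finset.sum_congr rfl fun p _ => Finset.sum_comm
    _ = ∑ k, ∑ p, ∑ q, conj (b k) * (C p q * (starRingEnd ℂ)
          ((∏ j, Function.update x i (sing k) j (p j)) * ∏ j, y j (q j))) :=
        Finset.sum_comm

lemma G_perm_x {C : (Fin d → Fin n) → (Fin d → Fin n) → ℂ} (hC : IsBisymT C)
    (x y : Fin d → Fin n → ℂ) (σ : Equiv.Perm (Fin d)) :
    G C (x ∘ σ) y = G C x y := by
  unfold G
  refine Fintype.sum_equiv (Equiv.arrowCongr σ (Equiv.refl (Fin n))) _ _ fun p => ?_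
  have hp : (Equiv.arrowCongr σ (Equiv.refl (Fin n))) p = p ∘ σ.symm := by
    funext j; simp [Equiv.arrowCongr]
  rw [hp]
  refine Finset.sum_congr rfl fun q _ => ?_
  have h1 : C (p ∘ ⇑σ.symm) q = C p q := by
    have := hC σ.symm 1 p q
    simpa using this
  have h2 : (∏ j, x j ((p ∘ ⇑σ.symm) j)) = ∏ j, (x ∘ ⇑σ) j (p j) := by
    simp only [Function.comp_apply]
    conv_lhs => rw [← Equiv.prod_comp σ (fun j => x j (p (σ.symm j)))]
    exact Finset.prod_congr rfl fun j _ => by rw [Equiv.symm_apply_apply]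
  rw [h1, h2]

lemma G_swap {C : (Fin d → Fin n) → (Fin d → Fin n) → ℂ} (hC : IsBisymT C)
    (x y : Fin d → Fin n → ℂ) (i j : Fin d) (hij : i ≠ j) (a b : Fin n → ℂ) :
    G C (Function.update (Function.update x i a) j b) y
      = G C (Function.update (Function.update x i b) j a) y := by
  have key : (Function.update (Function.update x i a) j b) ∘ (Equiv.swap i j)
      = Function.update (Function.update x i b) j a := by
    funext k
    rcases eq_or_ne k i with hk | hk
    · subst hk
      rw [Function.comp_apply, Equiv.swap_apply_left, Function.update_self,
        Function.update_of_ne hij, Function.update_self]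
    · rcases eq_or_ne k j with hk2 | hk2
      · subst hk2
        rw [Function.comp_apply, Equiv.swap_apply_right, Function.update_of_ne hij,
          Function.update_self, Function.update_self]
      · rw [Function.comp_apply, Equiv.swap_apply_of_ne_of_ne hk hk2,
          Function.update_of_ne hk2, Function.update_of_ne hk,
          Function.update_of_ne hk2, Function.update_of_ne hk]
  have h := G_perm_x hC (Function.update (Function.update x i a) j b) y (Equiv.swap i j)
  rw [key] at h
  exact h.symm

lemma G_flip (C : (Fin d → Fin n) → (Fin d → Fin n) → ℂ) (x y : Fin d → Fin n → ℂ) :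
    G C x y = G (fun a b => C b a) y x := by
  unfold G
  rw [Finset.sum_comm]
  refine Finset.sum_congr rfl fun q _ => Finset.sum_congr rfl fun p _ => ?_
  rw [mul_comm ((∏ j, y j (q j))) ((∏ j, x j (p j)))]

lemma flip_bisym {C : (Fin d → Fin n) → (Fin d → Fin n) → ℂ} (hC : IsBisymT C) :
    IsBisymT (fun a b => C b a) := fun σ τ p q => hC τ σ q p


def specSet (C : (Fin d → Fin n) → (Fin d → Fin n) → ℂ) : Set ℝ :=
  {r : ℝ | ∃ (x y : Fin d → Fin n → ℂ),
    (∀ j, vnorm (x j) = 1) ∧ (∀ j, vnorm (y j) = 1) ∧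
    r = ‖(∑ p, ∑ q, C p q *
      (starRingEnd ℂ) ((∏ j, x j (p j)) * (∏ j, y j (q j))))‖}

lemma specNorm2_eq (C : (Fin d → Fin n) → (Fin d → Fin n) → ℂ) :
    specNorm2 C = sSup (specSet C) := rfl

lemma mem_specSet {C : (Fin d → Fin n) → (Fin d → Fin n) → ℂ} {x y : Fin d → Fin n → ℂ}
    (hx : ∀ j, vnorm (x j) = 1) (hy : ∀ j, vnorm (y j) = 1) :
    ‖G C x y‖ ∈ specSet C := ⟨x, y, hx, hy, rfl⟩

lemma abs_prod_le_one {x : Fin d → Fin n → ℂ} (hx : ∀ j, vnorm (x j) = 1)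
    (p : Fin d → Fin n) : ‖∏ j, x j (p j)‖ ≤ 1 := by
  rw [Complex.norm_prod]
  apply Finset.prod_le_one
  · intro j _; exact norm_nonneg _
  · intro j _
    exact coord_le_one ((vnorm_one_iff _).mp (hx j)) _

lemma bddAbove_specSet (C : (Fin d → Fin n) → (Fin d → Fin n) → ℂ) :
    BddAbove (specSet C) := by
  refine ⟨∑ p, ∑ q, ‖C p q‖, ?_⟩
  rintro r ⟨x, y, hx, hy, rfl⟩
  calc ‖∑ p, ∑ q, C p q *
      (starRingEnd ℂ) ((∏ j, x j (p j)) * (∏ j, y j (q j)))‖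
      ≤ ∑ p, ‖∑ q, C p q *
      (starRingEnd ℂ) ((∏ j, x j (p j)) * (∏ j, y j (q j)))‖ := norm_sum_le _ _
    _ ≤ ∑ p, ∑ q, ‖C p q *
      (starRingEnd ℂ) ((∏ j, x j (p j)) * (∏ j, y j (q j)))‖ :=
        Finset.sum_le_sum fun p _ => norm_sum_le _ _
    _ ≤ ∑ p, ∑ q, ‖C p q‖ := by
        refine Finset.sum_le_sum fun p _ => Finset.sum_le_sum fun q _ => ?_
        rw [norm_mul]
        have h1 : ‖(starRingEnd ℂ) ((∏ j, x j (p j)) * (∏ j, y j (q j)))‖ ≤ 1 := by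
          rw [Complex.norm_conj, norm_mul]
          calc ‖∏ j, x j (p j)‖ * ‖∏ j, y j (q j)‖
              ≤ 1 * 1 := mul_le_mul (abs_prod_le_one hx p) (abs_prod_le_one hy q)
                (norm_nonneg _) zero_le_one
            _ = 1 := one_mul 1
        nlinarith [norm_nonneg (C p q),
          norm_nonneg ((starRingEnd ℂ) ((∏ j, x j (p j)) * (∏ j, y j (q j))))]

lemma abs_G_le {C : (Fin d → Fin n) → (Fin d → Fin n) → ℂ} {x y : Fin d → Fin n → ℂ}
    (hx : ∀ j, vnorm (x j) = 1) (hy : ∀ j, vnorm (y j) = 1) :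
    ‖G C x y‖ ≤ specNorm2 C :=
  le_csSup (bddAbove_specSet C) (mem_specSet hx hy)


lemma specNorm2_nonneg (C : (Fin d → Fin n) → (Fin d → Fin n) → ℂ)
    (hne : (specSet C).Nonempty) : 0 ≤ specNorm2 C := by
  obtain ⟨r, hr⟩ := hne
  obtain ⟨x, y, hx, hy, rfl⟩ := hr
  exact le_trans (norm_nonneg _) (le_csSup (bddAbove_specSet C) ⟨x, y, hx, hy, rfl⟩)

lemma specNorm2_flip (C : (Fin d → Fin n) → (Fin d → Fin n) → ℂ) :
    specNorm2 (fun a b => C b a) = specNorm2 C := by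
  rw [specNorm2_eq, specNorm2_eq]
  congr 1
  ext r
  constructor
  · rintro ⟨x, y, hx, hy, rfl⟩
    exact ⟨y, x, hy, hx, congrArg (‖·‖) (G_flip (fun a b => C b a) x y)⟩
  · rintro ⟨x, y, hx, hy, rfl⟩
    exact ⟨y, x, hy, hx, congrArg (‖·‖) (G_flip C x y)⟩

lemma cs_eq {M : ℝ} (hM : 0 ≤ M) (w u : Fin n → ℂ)
    (h1 : ∀ b : Fin n → ℂ, vnorm b = 1 → ‖∑ k, conj (b k) * w k‖ ≤ M)
    (h2 : (∑ k, conj (u k) * w k) = (M : ℂ)) (h3 : vnorm u = 1) :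
    w = fun k => (M : ℂ) * u k := by
  have hu : nsq u = 1 := (vnorm_one_iff u).mp h3
  have hwW : (∑ k, conj (w k) * w k) = ((nsq w : ℝ) : ℂ) := by
    unfold nsq
    push_cast
    exact Finset.sum_congr rfl fun k _ => by rw [Complex.normSq_eq_conj_mul_self]
  have hwle : nsq w ≤ M ^ 2 := by
    rcases eq_or_ne w 0 with hw | hw
    · rw [hw]; simp [nsq]; positivity
    · have hnsq : 0 < nsq w := by
        rcases lt_or_eq_of_le (nsq_nonneg w) with h | h
        · exact h
        · exact absurd ((nsq_eq_zero_iff w).mp h.symm) hw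
      set N := Real.sqrt (nsq w) with hN
      have hN0 : 0 < N := Real.sqrt_pos.mpr hnsq
      have hNsq : N ^ 2 = nsq w := Real.sq_sqrt (le_of_lt hnsq)
      have hbn : vnorm (fun k => (N : ℂ)⁻¹ * w k) = 1 := by
        rw [vnorm_one_iff, nsq_smul, Complex.normSq_inv, Complex.normSq_ofReal]
        field_simp
        nlinarith
      have hval : (∑ k, conj ((N : ℂ)⁻¹ * w k) * w k) = (N : ℂ) := by
        have : ∀ k, conj ((N : ℂ)⁻¹ * w k) * w k = (N : ℂ)⁻¹ * (conj (w k) * w k) := by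
          intro k
          rw [map_mul, map_inv₀, Complex.conj_ofReal]
          ring
        rw [Finset.sum_congr rfl fun k _ => this k, ← Finset.mul_sum, hwW]
        rw [show ((nsq w : ℝ) : ℂ) = ((N ^ 2 : ℝ) : ℂ) by rw [hNsq]]
        push_cast
        field_simp
      have := h1 _ hbn
      rw [hval] at this
      rw [Complex.norm_real, Real.norm_eq_abs, abs_of_pos hN0] at this
      nlinarith
  have hTze : nsq (fun k => w k - (M : ℂ) * u k) ≤ 0 := by
    have hexp := nsq_sub w (fun k => (M : ℂ) * u k)
    have hip : ip w (fun k => (M : ℂ) * u k) = ((M ^ 2 : ℝ) : ℂ) := by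
      unfold ip
      have : ∀ k, w k * conj ((M : ℂ) * u k) = (M : ℂ) * (conj (u k) * w k) := by
        intro k
        rw [map_mul, Complex.conj_ofReal]
        ring
      rw [Finset.sum_congr rfl fun k _ => this k, ← Finset.mul_sum, h2]
      push_cast
      ring
    have hnsqMu : nsq (fun k => (M : ℂ) * u k) = M ^ 2 := by
      rw [nsq_smul, Complex.normSq_ofReal, hu]
      ring
    rw [hexp, hip, hnsqMu]
    rw [Complex.ofReal_re]
    linarith
  have hT0 : nsq (fun k => w k - (M : ℂ) * u k) = 0 :=
    le_antisymm hTze (nsq_nonneg _)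
  have := (nsq_eq_zero_iff _).mp hT0
  funext k
  have hk := congrFun this k
  simpa [sub_eq_zero] using hk

lemma ip_smul_right (a b : Fin n → ℂ) (c : ℂ) :
    ip a (fun k => c * b k) = conj c * ip a b := by
  unfold ip
  rw [Finset.mul_sum]
  exact Finset.sum_congr rfl fun k _ => by rw [map_mul]; ring

def BB (C : (Fin d → Fin n) → (Fin d → Fin n) → ℂ) (x y : Fin d → Fin n → ℂ)
    (i j : Fin d) (a b : Fin n → ℂ) : ℂ :=
  G C (Function.update (Function.update x i a) j b) y

set_option maxHeartbeats 1000000 in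
lemma merge {C : (Fin d → Fin n) → (Fin d → Fin n) → ℂ} (hC : IsBisymT C)
    {x y : Fin d → Fin n → ℂ} (hx : ∀ l, vnorm (x l) = 1) (hy : ∀ l, vnorm (y l) = 1)
    (hG : G C x y = ((specNorm2 C : ℝ) : ℂ)) {i j : Fin d} (hij : i ≠ j) (hne : x i ≠ x j) :
    ∃ a : Fin n → ℂ, vnorm a = 1 ∧
      G C (Function.update (Function.update x i a) j a) y = ((specNorm2 C : ℝ) : ℂ) ∧
      nsq (fun k => ∑ l, x l k)
        < nsq (fun k => ∑ l, Function.update (Function.update x i a) j a l k) := by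
  classical
  set M := specNorm2 C with hMdef
  have hM0 : 0 ≤ M := specNorm2_nonneg C ⟨_, mem_specSet hx hy⟩
  have hBsym : ∀ a b, BB C x y i j a b = BB C x y i j b a :=
    fun a b => G_swap hC x y i j hij a b
  have hslots : ∀ (a b : Fin n → ℂ), vnorm a = 1 → vnorm b = 1 →
      ∀ l, vnorm ((Function.update (Function.update x i a) j b) l) = 1 := by
    intro a b ha hb l
    rcases eq_or_ne l j with h | h
    · subst h; rw [Function.update_self]; exact hb
    · rw [Function.update_of_ne h]
      rcases eq_or_ne l i with h2 | h2
      · subst h2; rw [Function.update_self]; exact ha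
      · rw [Function.update_of_ne h2]; exact hx l
  have hBle : ∀ a b, vnorm a = 1 → vnorm b = 1 → ‖BB C x y i j a b‖ ≤ M :=
    fun a b ha hb => abs_G_le (hslots a b ha hb) hy
  have hBval : BB C x y i j (x i) (x j) = ((M : ℝ) : ℂ) := by
    unfold BB
    rw [Function.update_eq_self i x]
    rw [Function.update_eq_self j x]
    exact hG
  have hexp2 : ∀ a b, BB C x y i j a b = ∑ k, conj (b k) * BB C x y i j a (sing k) :=
    fun a b => G_update_x C (Function.update x i a) y j b
  have hsm2 : ∀ (a : Fin n → ℂ) (c : ℂ) (b : Fin n → ℂ),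
      BB C x y i j a (fun k => c * b k) = conj c * BB C x y i j a b := by
    intro a c b
    rw [hexp2 a (fun k => c * b k), hexp2 a b, Finset.mul_sum]
    exact Finset.sum_congr rfl fun k _ => by rw [map_mul]; ring
  have hsm1 : ∀ (c : ℂ) (a b : Fin n → ℂ),
      BB C x y i j (fun k => c * a k) b = conj c * BB C x y i j a b := by
    intro c a b
    rw [hBsym _ b, hsm2 b c a, hBsym b a]
  have hadd2 : ∀ (a b b' : Fin n → ℂ),
      BB C x y i j a (fun k => b k + b' k) = BB C x y i j a b + BB C x y i j a b' := by
    intro a b b'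
    rw [hexp2 a (fun k => b k + b' k), hexp2 a b, hexp2 a b', ← Finset.sum_add_distrib]
    exact Finset.sum_congr rfl fun k _ => by rw [map_add]; ring
  have hadd1 : ∀ (a a' b : Fin n → ℂ),
      BB C x y i j (fun k => a k + a' k) b = BB C x y i j a b + BB C x y i j a' b := by
    intro a a' b
    rw [hBsym _ b, hadd2 b a a', hBsym b a, hBsym b a']
  set t : ℂ := ip (x i) (x j) with htdef
  have hw1 : (fun k => BB C x y i j (x i) (sing k)) = fun k => ((M : ℝ) : ℂ) * x j k := by
    refine cs_eq hM0 _ (x j) (fun b hb => ?_) ?_ (hx j)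
    · rw [← hexp2 (x i) b]
      exact hBle (x i) b (hx i) hb
    · rw [← hexp2 (x i) (x j)]
      exact hBval
  have hw2 : (fun k => BB C x y i j (x j) (sing k)) = fun k => ((M : ℝ) : ℂ) * x i k := by
    refine cs_eq hM0 _ (x i) (fun b hb => ?_) ?_ (hx i)
    · rw [← hexp2 (x j) b]
      exact hBle (x j) b (hx j) hb
    · rw [← hexp2 (x j) (x i), hBsym (x j) (x i)]
      exact hBval
  have hBxixi : BB C x y i j (x i) (x i) = ((M : ℝ) : ℂ) * conj t := by
    rw [hexp2 (x i) (x i)]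
    have hterm : ∀ k, conj (x i k) * BB C x y i j (x i) (sing k)
        = ((M : ℝ) : ℂ) * (conj (x i k) * x j k) := by
      intro k
      rw [congrFun hw1 k]; ring
    rw [Finset.sum_congr rfl fun k _ => hterm k, ← Finset.mul_sum]
    congr 1
    rw [htdef]
    unfold ip
    rw [map_sum]
    exact Finset.sum_congr rfl fun k _ => by rw [map_mul, Complex.conj_conj]
  have hBxjxj : BB C x y i j (x j) (x j) = ((M : ℝ) : ℂ) * t := by
    rw [hexp2 (x j) (x j)]
    have hterm : ∀ k, conj (x j k) * BB C x y i j (x j) (sing k)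
        = ((M : ℝ) : ℂ) * (x i k * conj (x j k)) := by
      intro k
      rw [congrFun hw2 k]; ring
    rw [Finset.sum_congr rfl fun k _ => hterm k, ← Finset.mul_sum]
    rfl
  have hBxjxi : BB C x y i j (x j) (x i) = ((M : ℝ) : ℂ) := by
    rw [hBsym (x j) (x i)]; exact hBval
  have hnsqxi : nsq (x i) = 1 := (vnorm_one_iff _).mp (hx i)
  have hnsqxj : nsq (x j) = 1 := (vnorm_one_iff _).mp (hx j)
  have hdiff : nsq (fun k => x i k - x j k) = 2 - 2 * t.re := by
    rw [nsq_sub, hnsqxi, hnsqxj, ← htdef]; ring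
  have htre1 : t.re < 1 := by
    have hpos : 0 < nsq (fun k => x i k - x j k) := by
      rcases lt_or_eq_of_le (nsq_nonneg (fun k => x i k - x j k)) with h | h
      · exact h
      · exfalso
        apply hne
        have h0 := (nsq_eq_zero_iff _).mp h.symm
        funext k
        have hk := congrFun h0 k
        simpa [sub_eq_zero] using hk
    rw [hdiff] at hpos
    linarith
  have hadd_conj : t + conj t = ((2 * t.re : ℝ) : ℂ) := by
    rw [Complex.add_conj]
  have hupdl : ∀ (a : Fin n → ℂ) (k : Fin n) (l : Fin d),
      (Function.update (Function.update x i a) j a) l k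
      = Function.update (Function.update (fun l' => x l' k) i (a k)) j (a k) l := by
    intro a k l
    rcases eq_or_ne l j with h | h
    · subst h; rw [Function.update_self, Function.update_self]
    · rw [Function.update_of_ne h, Function.update_of_ne h]
      rcases eq_or_ne l i with h2 | h2
      · subst h2; rw [Function.update_self, Function.update_self]
      · rw [Function.update_of_ne h2, Function.update_of_ne h2]
  have hSsum : ∀ (a : Fin n → ℂ) (k : Fin n),
      (∑ l, (Function.update (Function.update x i a) j a) l k)
      = ((∑ l, x l k) - x i k - x j k) + 2 * a k := by
    intro a k
    simp only [hupdl a k]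
    rw [Finset.sum_update_of_mem (Finset.mem_univ j)]
    have hi_mem : i ∈ Finset.univ \ ({j} : Finset (Fin d)) := by
      simp [hij]
    rw [Finset.sum_update_of_mem hi_mem]
    have h1 : ∑ l ∈ (Finset.univ \ ({j} : Finset (Fin d))) \ ({i} : Finset (Fin d)),
        x l k = ((∑ l, x l k) - x j k) - x i k := by
      rw [Finset.sum_sdiff_eq_sub
          (by simp [hij] : ({i} : Finset (Fin d)) ⊆ Finset.univ \ {j}),
        Finset.sum_sdiff_eq_sub (Finset.subset_univ _), Finset.sum_singleton,
        Finset.sum_singleton]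
    rw [h1]
    ring
  have hnewsum : ∀ a : Fin n → ℂ,
      (fun k => ∑ l, Function.update (Function.update x i a) j a l k)
      = fun k => (((∑ l, x l k) - x i k - x j k) + 2 * a k) := by
    intro a
    funext k
    exact hSsum a k
  set R : Fin n → ℂ := fun k => (∑ l, x l k) - x i k - x j k with hRdef
  set s : Fin n → ℂ := fun k => x i k + x j k with hsdef
  have hform : ∀ a : Fin n → ℂ,
      (fun k => (((∑ l, x l k) - x i k - x j k) + 2 * a k)) = fun k => R k + 2 * a k := by
    intro a
    funext k
    rw [hRdef]
  have hnsqs : nsq s = 2 + 2 * t.re := by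
    rw [hsdef, nsq_add, hnsqxi, hnsqxj, ← htdef]
    ring
  have holdS : nsq (fun k => ∑ l, x l k) = nsq R + 2 * (ip R s).re + nsq s := by
    have hSR : (fun k => ∑ l, x l k) = fun k => R k + s k := by
      funext k
      rw [hRdef, hsdef]
      ring
    rw [hSR, nsq_add]
  by_cases hs0 : s = 0
  -- antipodal case
  · have hs0' : ∀ k, x i k + x j k = 0 := by
      intro k
      have h := congrFun hs0 k
      rw [hsdef] at h
      exact h
    have hxj_eq : x j = fun k => (-1 : ℂ) * x i k := by
      funext k
      have := hs0' k
      linear_combination this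
    have ht : t = -1 := by
      rw [htdef, hxj_eq, ip_smul_right, ip_self, hnsqxi]
      simp
    set z := ip R (x i) with hzdef
    set ε : ℝ := if 0 ≤ z.im then 1 else -1 with hεdef
    have hε2 : ε ^ 2 = 1 := by rw [hεdef]; split <;> norm_num
    have hεε : ε * ε = 1 := by nlinarith
    have hεim : 0 ≤ ε * z.im := by
      rw [hεdef]; split
      · rename_i h; simpa using h
      · rename_i h; push_neg at h; nlinarith
    set μ : ℂ := (ε : ℂ) * Complex.I with hμdef
    set a : Fin n → ℂ := fun k => μ * x i k with hadef
    have hanorm : vnorm a = 1 := by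
      rw [vnorm_one_iff, hadef, nsq_smul, hnsqxi, hμdef, Complex.normSq_mul,
        Complex.normSq_ofReal, Complex.normSq_I]
      nlinarith
    have hconjμμ : conj μ * conj μ = -1 := by
      rw [hμdef, map_mul, Complex.conj_ofReal, Complex.conj_I]
      have h2 : ((ε : ℂ) * -Complex.I) * ((ε : ℂ) * -Complex.I)
          = ((ε ^ 2 : ℝ) : ℂ) * (Complex.I * Complex.I) := by
        push_cast; ring
      rw [h2, Complex.I_mul_I, hε2]
      simp
    have hBaa : BB C x y i j a a = ((M : ℝ) : ℂ) := by
      rw [hadef, hsm1 μ (x i) (fun k => μ * x i k), hsm2 (x i) μ (x i), hBxixi, ht]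
      rw [show conj (-1 : ℂ) = -1 from by simp]
      rw [show conj μ * (conj μ * (((M : ℝ) : ℂ) * -1))
          = (conj μ * conj μ) * (((M : ℝ) : ℂ) * -1) from by ring, hconjμμ]
      ring
    refine ⟨a, hanorm, hBaa, ?_⟩
    rw [hnewsum a, hform a, holdS, nsq_add R (fun k => 2 * a k)]
    have h2aμ : (fun k => 2 * a k) = fun k => (2 * μ) * x i k := by
      funext k
      rw [hadef]
      ring
    have hip2 : (ip R (fun k => 2 * a k)).re = 2 * (ε * z.im) := by
      rw [h2aμ, ip_smul_right, ← hzdef, hμdef]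
      simp [map_mul, Complex.conj_ofReal, Complex.conj_I, Complex.mul_re, Complex.mul_im,
        Complex.I_re, Complex.I_im, Complex.ofReal_re, Complex.ofReal_im]
      ring
    have hnsq2a : nsq (fun k => 2 * a k) = 4 := by
      rw [h2aμ, nsq_smul, hnsqxi, hμdef, Complex.normSq_mul, Complex.normSq_mul,
        Complex.normSq_ofReal, Complex.normSq_I]
      norm_num
      nlinarith
    have hips : (ip R s).re = 0 := by
      rw [hs0]
      unfold ip
      simp
    have hnsqs0 : nsq s = 0 := by
      rw [hs0]
      unfold nsq
      simp
    rw [hip2, hnsq2a, hips, hnsqs0]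
    nlinarith [hεim]
  -- generic case
  · have hc2pos : 0 < nsq s := by
      rcases lt_or_eq_of_le (nsq_nonneg s) with h | h
      · exact h
      · exact absurd ((nsq_eq_zero_iff s).mp h.symm) hs0
    set c := Real.sqrt (nsq s) with hcdef
    have hc0 : 0 < c := Real.sqrt_pos.mpr hc2pos
    have hcsq : c ^ 2 = 2 + 2 * t.re := by
      rw [hcdef, Real.sq_sqrt (le_of_lt hc2pos), hnsqs]
    have hclt2 : c < 2 := by nlinarith
    set ρ : ℝ := (ip R s).re with hρdef
    set ε : ℝ := if 0 ≤ ρ then 1 else -1 with hεdef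
    have hε2 : ε ^ 2 = 1 := by rw [hεdef]; split <;> norm_num
    have hεε : ε * ε = 1 := by nlinarith
    have hgain : 2 * ρ ≤ 4 * (ε / c) * ρ := by
      have h1 : 4 * (ε / c) * ρ = (4 * ε * ρ) / c := by ring
      rw [h1, le_div_iff₀ hc0]
      rw [hεdef]
      split
      · rename_i h; nlinarith
      · rename_i h; push_neg at h; nlinarith
    set μ : ℂ := ((ε / c : ℝ) : ℂ) with hμdef
    set a : Fin n → ℂ := fun k => μ * s k with hadef
    have hanorm : vnorm a = 1 := by
      rw [vnorm_one_iff, hadef, nsq_smul, hμdef, Complex.normSq_ofReal, hnsqs, ← hcsq]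
      field_simp
      nlinarith [sq_nonneg c]
    have hBss : BB C x y i j s s = ((M : ℝ) : ℂ) * (2 + (t + conj t)) := by
      have hsplit : BB C x y i j s s
          = BB C x y i j (x i) (x i) + BB C x y i j (x i) (x j)
            + (BB C x y i j (x j) (x i) + BB C x y i j (x j) (x j)) := by
        rw [hsdef]
        rw [hadd1 (x i) (x j) (fun k => x i k + x j k),
          hadd2 (x i) (x i) (x j), hadd2 (x j) (x i) (x j)]
      rw [hsplit, hBxixi, hBval, hBxjxi, hBxjxj]
      ring
    have hBaa : BB C x y i j a a = ((M : ℝ) : ℂ) := by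
      rw [hadef, hsm1 μ s (fun k => μ * s k), hsm2 s μ s, hBss]
      rw [hμdef, Complex.conj_ofReal, hadd_conj]
      have hcast : ((ε / c : ℝ) : ℂ) * (((ε / c : ℝ) : ℂ)
            * (((M : ℝ) : ℂ) * (2 + ((2 * t.re : ℝ) : ℂ))))
          = (((ε / c) * ((ε / c) * (M * (2 + 2 * t.re))) : ℝ) : ℂ) := by
        push_cast; ring
      rw [hcast]
      norm_cast
      rw [← hcsq]
      field_simp
      linear_combination M * hεε
    refine ⟨a, hanorm, hBaa, ?_⟩
    rw [hnewsum a, hform a, holdS, nsq_add R (fun k => 2 * a k)]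
    have h2aμ : (fun k => 2 * a k) = fun k => ((2 * ε / c : ℝ) : ℂ) * s k := by
      funext k
      rw [hadef, hμdef]
      push_cast
      ring
    have hip2 : (ip R (fun k => 2 * a k)).re = (2 * ε / c) * ρ := by
      rw [h2aμ, ip_smul_right, Complex.conj_ofReal, Complex.re_ofReal_mul, hρdef]
    have hnsq2a : nsq (fun k => 2 * a k) = 4 := by
      rw [h2aμ, nsq_smul, Complex.normSq_ofReal, hnsqs, ← hcsq]
      field_simp
      nlinarith [sq_nonneg c]
    rw [hip2, hnsq2a, hnsqs]
    have hg2 : 2 * ((2 * ε / c) * ρ) = 4 * (ε / c) * ρ := by ring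
    rw [hg2]
    linarith [hgain, htre1]

lemma vnorm_sing (k : Fin n) : vnorm (sing k) = 1 := by
  rw [vnorm_one_iff]
  unfold nsq sing
  rw [Finset.sum_eq_single k]
  · simp
  · intro m _ hm
    simp [Pi.single_apply, hm]
  · intro h
    exact absurd (Finset.mem_univ k) h

lemma G_smul_x (C : (Fin d → Fin n) → (Fin d → Fin n) → ℂ) (x y : Fin d → Fin n → ℂ)
    (i : Fin d) (c : ℂ) (v : Fin n → ℂ) :
    G C (Function.update x i (fun k => c * v k)) y
      = conj c * G C (Function.update x i v) y := by
  rw [G_update_x C x y i (fun k => c * v k), G_update_x C x y i v, Finset.mul_sum]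
  exact Finset.sum_congr rfl fun k _ => by rw [map_mul]; ring

lemma slots_update {x : Fin d → Fin n → ℂ} (hx : ∀ l, vnorm (x l) = 1) (i j : Fin d)
    {a : Fin n → ℂ} (ha : vnorm a = 1) :
    ∀ l, vnorm (Function.update (Function.update x i a) j a l) = 1 := by
  intro l
  rcases eq_or_ne l j with h | h
  · subst h; rw [Function.update_self]; exact ha
  · rw [Function.update_of_ne h]
    rcases eq_or_ne l i with h2 | h2
    · subst h2; rw [Function.update_self]; exact ha
    · rw [Function.update_of_ne h2]; exact hx l

lemma vnorm_continuous : Continuous (vnorm : (Fin n → ℂ) → ℝ) := by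
  unfold vnorm
  exact Real.continuous_sqrt.comp
    (continuous_finset_sum _ fun i _ => ((continuous_apply i).norm.pow 2))

lemma G_continuous (C : (Fin d → Fin n) → (Fin d → Fin n) → ℂ) :
    Continuous (fun p : ((Fin d → Fin n → ℂ) × (Fin d → Fin n → ℂ)) => G C p.1 p.2) := by
  unfold G
  refine continuous_finset_sum _ fun pp _ => continuous_finset_sum _ fun qq _ => ?_
  refine continuous_const.mul (Complex.continuous_conj.comp (Continuous.mul ?_ ?_))
  · exact continuous_finset_prod _ fun j _ =>
      (continuous_apply (pp j)).comp ((continuous_apply j).comp continuous_fst)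
  · exact continuous_finset_prod _ fun j _ =>
      (continuous_apply (qq j)).comp ((continuous_apply j).comp continuous_snd)

end Stmt10Aux

set_option maxHeartbeats 2000000

open Stmt10Aux in
/-- For a bisymmetric `2d`-mode tensor `C` on `ℂ^n`, the spectral norm
is attained on symmetric rank-one tensors:
`‖C‖_∞ = max { Re⟨C, (⊗^d x)⊗(⊗^d y)⟩ : ‖x‖ = ‖y‖ = 1 }`. -/
theorem stmt10 (n d : ℕ) (hn : 2 ≤ n) (hd : 2 ≤ d)
    (C : (Fin d → Fin n) → (Fin d → Fin n) → ℂ) (hC : IsBisymT C) :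
    specNorm2 C = sSup {r : ℝ | ∃ x y : Fin n → ℂ, vnorm x = 1 ∧ vnorm y = 1 ∧
      r = (∑ p, ∑ q, C p q *
        (starRingEnd ℂ) ((∏ j, x (p j)) * (∏ j, y (q j)))).re} := by
  classical
  have hd0 : 0 < d := by omega
  have hn0 : 0 < n := by omega
  set i0 : Fin d := ⟨0, hd0⟩ with hi0def
  set k0 : Fin n := ⟨0, hn0⟩ with hk0def
  set D : Set ((Fin d → Fin n → ℂ) × (Fin d → Fin n → ℂ)) :=
    {p | (∀ l, vnorm (p.1 l) = 1) ∧ (∀ l, vnorm (p.2 l) = 1)} with hDdef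
  have hDmem : ∀ p, p ∈ D ↔ ((∀ l, vnorm (p.1 l) = 1) ∧ (∀ l, vnorm (p.2 l) = 1)) := by
    intro p
    rw [hDdef]
    exact Iff.rfl
  have hDclosed : IsClosed D := by
    have heq : D = (⋂ l, {p : ((Fin d → Fin n → ℂ) × (Fin d → Fin n → ℂ)) |
        vnorm (p.1 l) = 1}) ∩ (⋂ l, {p | vnorm (p.2 l) = 1}) := by
      ext p
      simp [hDmem p, Set.mem_iInter]
    rw [heq]
    refine IsClosed.inter (isClosed_iInter fun l => ?_) (isClosed_iInter fun l => ?_)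
    · exact isClosed_eq (vnorm_continuous.comp ((continuous_apply l).comp continuous_fst))
        continuous_const
    · exact isClosed_eq (vnorm_continuous.comp ((continuous_apply l).comp continuous_snd))
        continuous_const
  have hDbdd : Bornology.IsBounded D := by
    apply Bornology.IsBounded.subset (Metric.isBounded_closedBall
      (x := (0 : (Fin d → Fin n → ℂ) × (Fin d → Fin n → ℂ))) (r := 1))
    intro p hp
    rw [hDmem p] at hp
    rw [Metric.mem_closedBall, dist_zero_right, Prod.norm_def]
    apply max_le
    · rw [pi_norm_le_iff_of_nonneg zero_le_one]
      intro l
      rw [pi_norm_le_iff_of_nonneg zero_le_one]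
      intro k
      have := coord_le_one ((vnorm_one_iff _).mp (hp.1 l)) k
      simpa using this
    · rw [pi_norm_le_iff_of_nonneg zero_le_one]
      intro l
      rw [pi_norm_le_iff_of_nonneg zero_le_one]
      intro k
      have := coord_le_one ((vnorm_one_iff _).mp (hp.2 l)) k
      simpa using this
  have hDcompact : IsCompact D := Metric.isCompact_of_isClosed_isBounded hDclosed hDbdd
  have hDne : D.Nonempty := by
    refine ⟨(fun _ => sing k0, fun _ => sing k0), ?_⟩
    rw [hDmem]
    exact ⟨fun _ => vnorm_sing k0, fun _ => vnorm_sing k0⟩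
  have hGcont := G_continuous C
  have habs_cont : Continuous (fun p : ((Fin d → Fin n → ℂ) × (Fin d → Fin n → ℂ)) =>
      ‖G C p.1 p.2‖) := continuous_norm.comp hGcont
  obtain ⟨p₀, hp₀D, hp₀max₀⟩ := hDcompact.exists_isMaxOn hDne habs_cont.continuousOn
  have hp₀max := isMaxOn_iff.mp hp₀max₀
  rw [hDmem] at hp₀D
  have hMeq : specNorm2 C = ‖G C p₀.1 p₀.2‖ := by
    apply le_antisymm
    · rw [specNorm2_eq]
      apply csSup_le ⟨_, mem_specSet hp₀D.1 hp₀D.2⟩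
      rintro r ⟨xx, yy, hxx, hyy, rfl⟩
      exact hp₀max (xx, yy) (by rw [hDmem]; exact ⟨hxx, hyy⟩)
    · exact abs_G_le hp₀D.1 hp₀D.2
  -- phase rotation: find a point where G is real and equal to the norm
  obtain ⟨p₁, hp₁D, hp₁G⟩ : ∃ p : ((Fin d → Fin n → ℂ) × (Fin d → Fin n → ℂ)),
      p ∈ D ∧ G C p.1 p.2 = ((specNorm2 C : ℝ) : ℂ) := by
    by_cases h0 : G C p₀.1 p₀.2 = 0
    · refine ⟨p₀, by rw [hDmem]; exact hp₀D, ?_⟩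
      rw [h0, hMeq, h0]
      simp
    · have habs0 : ‖G C p₀.1 p₀.2‖ ≠ 0 := norm_ne_zero_iff.mpr h0
      set lam : ℂ := G C p₀.1 p₀.2 / ((‖G C p₀.1 p₀.2‖ : ℝ) : ℂ) with hlamdef
      have hslot1 : ∀ l, vnorm (Function.update p₀.1 i0 (fun k => lam * p₀.1 i0 k) l) = 1 := by
        intro l
        rcases eq_or_ne l i0 with rfl | hl
        · rw [Function.update_self, vnorm_one_iff, nsq_smul,
            (vnorm_one_iff _).mp (hp₀D.1 i0), mul_one, hlamdef]
          rw [Complex.normSq_div, Complex.normSq_ofReal, Complex.normSq_eq_norm_sq]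
          field_simp
        · rw [Function.update_of_ne hl]
          exact hp₀D.1 l
      refine ⟨(Function.update p₀.1 i0 (fun k => lam * p₀.1 i0 k), p₀.2),
        by rw [hDmem]; exact ⟨hslot1, hp₀D.2⟩, ?_⟩
      rw [G_smul_x C p₀.1 p₀.2 i0 lam (p₀.1 i0)]
      rw [Function.update_eq_self i0 p₀.1]
      rw [hMeq, hlamdef, map_div₀, Complex.conj_ofReal, div_mul_eq_mul_div]
      have h1 : conj (G C p₀.1 p₀.2) * G C p₀.1 p₀.2
          = ((Complex.normSq (G C p₀.1 p₀.2) : ℝ) : ℂ) := by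
        rw [Complex.normSq_eq_conj_mul_self]
      rw [h1, Complex.normSq_eq_norm_sq]
      push_cast
      field_simp
  -- the set of maximizers with real value
  set K : Set ((Fin d → Fin n → ℂ) × (Fin d → Fin n → ℂ)) :=
    D ∩ {p | G C p.1 p.2 = ((specNorm2 C : ℝ) : ℂ)} with hKdef
  have hKmem : ∀ p, p ∈ K ↔ (p ∈ D ∧ G C p.1 p.2 = ((specNorm2 C : ℝ) : ℂ)) := by
    intro p
    rw [hKdef]
    exact Iff.rfl
  have hKcomp : IsCompact K := hDcompact.inter_right (isClosed_eq hGcont continuous_const)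
  have hKne : K.Nonempty := ⟨p₁, by rw [hKmem]; exact ⟨hp₁D, hp₁G⟩⟩
  have hΦcont : Continuous (fun p : ((Fin d → Fin n → ℂ) × (Fin d → Fin n → ℂ)) =>
      nsq (fun k => ∑ l, p.1 l k) + nsq (fun k => ∑ l, p.2 l k)) := by
    unfold nsq
    refine Continuous.add ?_ ?_
    · exact continuous_finset_sum _ fun k _ => Complex.continuous_normSq.comp
        (continuous_finset_sum _ fun l _ => (continuous_apply k).comp
          ((continuous_apply l).comp continuous_fst))
    · exact continuous_finset_sum _ fun k _ => Complex.continuous_normSq.comp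
        (continuous_finset_sum _ fun l _ => (continuous_apply k).comp
          ((continuous_apply l).comp continuous_snd))
  obtain ⟨pm, hpmK, hpmmax₀⟩ := hKcomp.exists_isMaxOn hKne hΦcont.continuousOn
  have hpmmax := isMaxOn_iff.mp hpmmax₀
  rw [hKmem] at hpmK
  obtain ⟨hpmD, hmG⟩ := hpmK
  rw [hDmem] at hpmD
  obtain ⟨hmx, hmy⟩ := hpmD
  have hxeq : ∀ i j : Fin d, pm.1 i = pm.1 j := by
    intro i j
    rcases eq_or_ne i j with rfl | hij
    · rfl
    by_contra hne
    obtain ⟨a, ha1, ha2, ha3⟩ := merge hC hmx hmy hmG hij hne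
    have hmem : (Function.update (Function.update pm.1 i a) j a, pm.2) ∈ K := by
      rw [hKmem]
      exact ⟨by rw [hDmem]; exact ⟨slots_update hmx i j ha1, hmy⟩, ha2⟩
    have hle := hpmmax _ hmem
    simp only at hle
    linarith
  have hyeq : ∀ i j : Fin d, pm.2 i = pm.2 j := by
    intro i j
    rcases eq_or_ne i j with rfl | hij
    · rfl
    by_contra hne
    have hGflip : G (fun a b => C b a) pm.2 pm.1
        = ((specNorm2 (fun a b => C b a) : ℝ) : ℂ) := by
      rw [specNorm2_flip, ← G_flip]
      exact hmG
    obtain ⟨a, ha1, ha2, ha3⟩ := merge (flip_bisym hC) hmy hmx hGflip hij hne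
    have ha2' : G C pm.1 (Function.update (Function.update pm.2 i a) j a)
        = ((specNorm2 C : ℝ) : ℂ) := by
      rw [G_flip C pm.1 (Function.update (Function.update pm.2 i a) j a)]
      rw [ha2, specNorm2_flip]
    have hmem : (pm.1, Function.update (Function.update pm.2 i a) j a) ∈ K := by
      rw [hKmem]
      exact ⟨by rw [hDmem]; exact ⟨hmx, slots_update hmy i j ha1⟩, ha2'⟩
    have hle := hpmmax _ hmem
    simp only at hle
    linarith
  -- conclusion
  have e1 : (fun _ : Fin d => pm.1 i0) = pm.1 := funext fun l => (hxeq l i0).symm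
  have e2 : (fun _ : Fin d => pm.2 i0) = pm.2 := funext fun l => (hyeq l i0).symm
  have hmemM : specNorm2 C ∈ {r : ℝ | ∃ x y : Fin n → ℂ, vnorm x = 1 ∧ vnorm y = 1 ∧
      r = (∑ p, ∑ q, C p q *
        (starRingEnd ℂ) ((∏ j, x (p j)) * (∏ j, y (q j)))).re} := by
    refine ⟨pm.1 i0, pm.2 i0, hmx i0, hmy i0, ?_⟩
    have hform : (∑ p, ∑ q, C p q *
        (starRingEnd ℂ) ((∏ j, pm.1 i0 (p j)) * (∏ j, pm.2 i0 (q j))))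
        = G C (fun _ => pm.1 i0) (fun _ => pm.2 i0) := rfl
    rw [hform, e1, e2, hmG, Complex.ofReal_re]
  have hub : ∀ r ∈ {r : ℝ | ∃ x y : Fin n → ℂ, vnorm x = 1 ∧ vnorm y = 1 ∧
      r = (∑ p, ∑ q, C p q *
        (starRingEnd ℂ) ((∏ j, x (p j)) * (∏ j, y (q j)))).re}, r ≤ specNorm2 C := by
    rintro r ⟨xx, yy, hxx, hyy, rfl⟩
    have hform : (∑ p, ∑ q, C p q *
        (starRingEnd ℂ) ((∏ j, xx (p j)) * (∏ j, yy (q j))))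
        = G C (fun _ => xx) (fun _ => yy) := rfl
    rw [hform]
    exact le_trans (Complex.re_le_norm _)
      (abs_G_le (fun _ => hxx) (fun _ => hyy))
  exact le_antisymm (le_csSup ⟨specNorm2 C, hub⟩ hmemM)
    (csSup_le ⟨specNorm2 C, hmemM⟩ hub)
end
end

section
/- Let n, d ≥ 2 and let A be a hermitian bisymmetric 2d-mode tensor on ℂ^n which is a density tensor. The following are equivalent: (1) A is separable; (2) ‖A‖_{1,ℂ} = 1; (3) A = Σ_{i=1}^r p_i (⊗^d x_i)⊗(⊗^d conj(x_i)) for some unit vectors x_i ∈ ℂ^n and p_i > 0 with Σ_i p_i = 1. -/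
open scoped ComplexOrder

noncomputable section
open Finset


private lemma sum_extend {M : Type*} [AddCommMonoid M] {c D : ℕ} (hcD : c ≤ D) (g : Fin c → M) :
    (∑ i : Fin D, if h : (i : ℕ) < c then g ⟨i, h⟩ else 0) = ∑ j : Fin c, g j := by
  set f : ℕ → M := fun i => if h : i < c then g ⟨i, h⟩ else 0 with hf
  have h1 : (∑ i : Fin D, if h : (i : ℕ) < c then g ⟨i, h⟩ else 0) = ∑ i ∈ Finset.range D, f i :=
    Fin.sum_univ_eq_sum_range f D
  have h2 : ∑ i ∈ Finset.range c, f i = ∑ i ∈ Finset.range D, f i := by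
    apply Finset.sum_subset (Finset.range_subset_range.2 hcD)
    intro x _ hx
    rw [Finset.mem_range, not_lt] at hx
    simp only [hf, dif_neg (not_lt.2 hx)]
  have h3 : ∑ j : Fin c, g j = ∑ i ∈ Finset.range c, f i := by
    rw [← Fin.sum_univ_eq_sum_range f c]
    exact Finset.sum_congr rfl fun j _ => by simp [hf, j.isLt]
  rw [h1, ← h2, ← h3]

theorem isCompact_convexHull_of_isCompact {V : Type*} [NormedAddCommGroup V] [NormedSpace ℝ V]
    [FiniteDimensional ℝ V] {s : Set V} (hs : IsCompact s) :
    IsCompact (convexHull ℝ s) := by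
  rcases s.eq_empty_or_nonempty with rfl | ⟨z₀, hz₀⟩
  · simp [convexHull_empty, isCompact_empty]
  set D := Module.finrank ℝ V + 1 with hD
  have key : convexHull ℝ s =
      (fun wz : (Fin D → ℝ) × (Fin D → V) => ∑ i, wz.1 i • wz.2 i) ''
        ((stdSimplex ℝ (Fin D)) ×ˢ (Set.univ.pi fun _ => s)) := by
    apply Set.Subset.antisymm
    · intro x hx
      rw [convexHull_eq_union] at hx
      simp only [Set.mem_iUnion] at hx
      obtain ⟨t, hts, hai, hxt⟩ := hx
      have hcard : t.card ≤ D := by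
        have h1 := hai.card_le_finrank_succ
        have h2 : Module.finrank ℝ (vectorSpan ℝ (Set.range ((↑) : t → V))) ≤
            Module.finrank ℝ V := Submodule.finrank_le _
        simp only [Fintype.card_coe] at h1
        omega
      rw [Finset.convexHull_eq] at hxt
      obtain ⟨w, hw0, hw1, hwx⟩ := hxt
      have e := t.equivFin
      refine ⟨⟨fun i => if h : (i : ℕ) < t.card then w (e.symm ⟨i, h⟩) else 0,
              fun i => if h : (i : ℕ) < t.card then ((e.symm ⟨i, h⟩ : V)) else z₀⟩,
              ⟨⟨fun i => ?_, ?_⟩, fun i _ => ?_⟩, ?_⟩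
      · dsimp only
        split
        · exact hw0 _ (Finset.coe_mem _)
        · exact le_rfl
      · dsimp only
        rw [sum_extend hcard (fun j => w (e.symm j)),
          Equiv.sum_comp e.symm (fun y : t => w (y : V)), Finset.sum_coe_sort t w, hw1]
      · dsimp only
        split
        · exact hts (Finset.coe_mem _)
        · exact hz₀
      · dsimp only
        have : (∑ i : Fin D, (if h : (i : ℕ) < t.card then w (e.symm ⟨i, h⟩) else 0) •
            (if h : (i : ℕ) < t.card then ((e.symm ⟨i, h⟩ : V)) else z₀)) =
            ∑ i : Fin D, (if h : (i : ℕ) < t.card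
              then w (e.symm ⟨i, h⟩) • ((e.symm ⟨i, h⟩ : V)) else 0) := by
          refine Finset.sum_congr rfl fun i _ => ?_
          split <;> simp
        rw [this, sum_extend hcard (fun j => w (e.symm j) • ((e.symm j : V))),
          Equiv.sum_comp e.symm (fun y : t => w (y : V) • (y : V)),
          Finset.sum_coe_sort t (fun y => w y • y), ← hwx, Finset.centerMass, hw1]
        simp
    · rintro _ ⟨⟨w, z⟩, ⟨⟨hw0, hw1⟩, hz⟩, rfl⟩
      have : ∑ i, w i • z i = Finset.univ.centerMass w z := by
        rw [Finset.centerMass, hw1]; simp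
      dsimp only
      rw [this]
      exact Finset.centerMass_mem_convexHull _ (fun i _ => hw0 i) (by rw [hw1]; norm_num)
        (fun i _ => hz i (Set.mem_univ i))
  rw [key]
  exact ((isCompact_stdSimplex _ _).prod (isCompact_univ_pi fun _ => hs)).image (by fun_prop)

def en {ι : Type*} [Fintype ι] (x : ι → ℂ) : ℝ := Real.sqrt (∑ i, ‖x i‖ ^ 2)

lemma en_nonneg {ι : Type*} [Fintype ι] (x : ι → ℂ) : 0 ≤ en x := Real.sqrt_nonneg _

lemma en_eq_norm {ι : Type*} [Fintype ι] (x : EuclideanSpace ℂ ι) : ‖x‖ = en x :=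
  EuclideanSpace.norm_eq x

lemma en_sq {ι : Type*} [Fintype ι] (x : ι → ℂ) : en x ^ 2 = ∑ i, ‖x i‖ ^ 2 :=
  Real.sq_sqrt (Finset.sum_nonneg fun i _ => sq_nonneg _)

lemma coord_le_en {ι : Type*} [Fintype ι] (x : ι → ℂ) (i : ι) : ‖x i‖ ≤ en x := by
  rw [en, show ‖x i‖ = Real.sqrt (‖x i‖ ^ 2) by rw [Real.sqrt_sq (norm_nonneg _)]]
  exact Real.sqrt_le_sqrt (Finset.single_le_sum (fun j _ => sq_nonneg ‖x j‖) (mem_univ i))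

lemma en_zero_iff {ι : Type*} [Fintype ι] (x : ι → ℂ) (h : en x = 0) (i : ι) : x i = 0 := by
  have := coord_le_en x i
  rw [h] at this
  exact norm_le_zero_iff.mp this

lemma en_conj {ι : Type*} [Fintype ι] (x : ι → ℂ) :
    en (fun i => (starRingEnd ℂ) (x i)) = en x := by
  unfold en; congr 1; exact Finset.sum_congr rfl fun i _ => by rw [RCLike.norm_conj]

lemma en_cmul {ι : Type*} [Fintype ι] (c : ℂ) (x : ι → ℂ) :
    en (fun i => c * x i) = ‖c‖ * en x := by
  unfold en
  rw [← Real.sqrt_sq (norm_nonneg c), ← Real.sqrt_mul (sq_nonneg _), Finset.mul_sum]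
  congr 1
  exact Finset.sum_congr rfl fun i _ => by rw [norm_mul, mul_pow]

/-- Cauchy–Schwarz for the bilinear dot product. -/
lemma abs_dot_le {ι : Type*} [Fintype ι] (x y : ι → ℂ) :
    ‖∑ i, x i * y i‖ ≤ en x * en y := by
  let x' : EuclideanSpace ℂ ι := WithLp.toLp 2 (fun i => (starRingEnd ℂ) (x i))
  let y' : EuclideanSpace ℂ ι := WithLp.toLp 2 y
  have h := norm_inner_le_norm (𝕜 := ℂ) x' y'
  rw [PiLp.inner_apply] at h
  have hx : ‖x'‖ = en x := by rw [en_eq_norm]; exact en_conj x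
  have hy : ‖y'‖ = en y := en_eq_norm y'
  rw [hx, hy] at h
  refine le_trans (le_of_eq ?_) h
  congr 1
  refine Finset.sum_congr rfl fun i _ => ?_
  simp only [RCLike.inner_apply', x', y', WithLp.ofLp_toLp]
  rw [starRingEnd_self_apply]

lemma sum_prod_swap {M : Type*} [CommSemiring M] {d n : ℕ} (f : Fin d → Fin n → M) :
    ∑ p : Fin d → Fin n, ∏ j, f j (p j) = ∏ j, ∑ k, f j k := by
  rw [Finset.prod_univ_sum, Fintype.piFinset_univ]

lemma en_prodVec {d n : ℕ} (z : Fin d → Fin n → ℂ) :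
    en (fun p : Fin d → Fin n => ∏ j, z j (p j)) = ∏ j, en (z j) := by
  have h1 : (∑ p : Fin d → Fin n, ‖∏ j, z j (p j)‖ ^ 2) = ∏ j, ∑ k, ‖z j k‖ ^ 2 := by
    rw [← sum_prod_swap (fun j k => ‖z j k‖ ^ 2)]
    exact Finset.sum_congr rfl fun p _ => by rw [norm_prod, ← Finset.prod_pow]
  rw [en, h1]
  have : ∀ j ∈ (univ : Finset (Fin d)), (0:ℝ) ≤ ∑ k, ‖z j k‖ ^ 2 :=
    fun j _ => Finset.sum_nonneg fun k _ => sq_nonneg _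
  rw [show (∏ j, ∑ k, ‖z j k‖ ^ 2) = ∏ j, (en (z j))^2 from
    Finset.prod_congr rfl fun j _ => (en_sq (z j)).symm, Finset.prod_pow]
  exact Real.sqrt_sq (Finset.prod_nonneg fun j _ => en_nonneg _)

lemma coord_prodVec_le {d n : ℕ} (z : Fin d → Fin n → ℂ) (p : Fin d → Fin n) :
    ‖∏ j, z j (p j)‖ ≤ ∏ j, en (z j) := by
  rw [← en_prodVec]
  exact coord_le_en (fun p : Fin d → Fin n => ∏ j, z j (p j)) p
lemma vnorm_eq_en {k : ℕ} (x : Fin k → ℂ) : vnorm x = en x := rfl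
-- === Module A : trace identity and lower bound ===

lemma trace_decomp {n d m : ℕ} (A : (Fin d → Fin n) → (Fin d → Fin n) → ℂ)
    (x y : Fin m → Fin d → Fin n → ℂ)
    (hA : A = fun p q => ∑ i, (∏ j, x i j (p j)) * (∏ j, y i j (q j))) :
    traceT A = ∑ i, ∏ j, (∑ k, x i j k * y i j k) := by
  rw [traceT, hA]
  dsimp only
  rw [Finset.sum_comm]
  refine Finset.sum_congr rfl fun i _ => ?_
  rw [← sum_prod_swap (fun j k => x i j k * y i j k)]
  exact Finset.sum_congr rfl fun p _ => (Finset.prod_mul_distrib).symm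

lemma nuc_mem_ge_one {n d m : ℕ} (A : (Fin d → Fin n) → (Fin d → Fin n) → ℂ)
    (htr : traceT A = 1) (x y : Fin m → Fin d → Fin n → ℂ)
    (hA : A = fun p q => ∑ i, (∏ j, x i j (p j)) * (∏ j, y i j (q j))) :
    1 ≤ ∑ i, (∏ j, vnorm (x i j)) * (∏ j, vnorm (y i j)) := by
  have h1 : (1:ℂ) = ∑ i, ∏ j, (∑ k, x i j k * y i j k) := by
    rw [← htr, trace_decomp A x y hA]
  calc (1:ℝ) = ‖(1:ℂ)‖ := by simp
    _ = ‖∑ i, ∏ j, (∑ k, x i j k * y i j k)‖ := by rw [← h1]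
    _ ≤ ∑ i, ‖∏ j, (∑ k, x i j k * y i j k)‖ := norm_sum_le _ _
    _ ≤ ∑ i, (∏ j, vnorm (x i j)) * (∏ j, vnorm (y i j)) := by
        refine Finset.sum_le_sum fun i _ => ?_
        rw [norm_prod, ← Finset.prod_mul_distrib]
        refine Finset.prod_le_prod (fun j _ => norm_nonneg _) fun j _ => ?_
        rw [vnorm_eq_en, vnorm_eq_en]
        exact abs_dot_le _ _
lemma nucSet_nonneg {n d : ℕ} (A : (Fin d → Fin n) → (Fin d → Fin n) → ℂ) :
    ∀ r ∈ {r : ℝ | ∃ (m : ℕ) (x y : Fin m → Fin d → Fin n → ℂ),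
      A = (fun p q => ∑ i, (∏ j, x i j (p j)) * (∏ j, y i j (q j))) ∧
      r = ∑ i, (∏ j, vnorm (x i j)) * (∏ j, vnorm (y i j))}, (0:ℝ) ≤ r := by
  rintro r ⟨m, x, y, -, rfl⟩
  exact Finset.sum_nonneg fun i _ => mul_nonneg
    (Finset.prod_nonneg fun j _ => Real.sqrt_nonneg _)
    (Finset.prod_nonneg fun j _ => Real.sqrt_nonneg _)

-- === Module B : Separable → nucNorm2 = 1 ===
lemma sep_nuc {n d : ℕ} (hd : 1 ≤ d)
    (A : (Fin d → Fin n) → (Fin d → Fin n) → ℂ) (hsep : Separable A)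
    (htr : traceT A = 1) : nucNorm2 A = 1 := by
  obtain ⟨r, p, x, hx1, hp0, hp1, hA⟩ := hsep
  set j0 : Fin d := ⟨0, by omega⟩ with hj0
  set X : Fin r → Fin d → Fin n → ℂ :=
    fun i j => if j = j0 then (fun k => (p i : ℂ) * x i j k) else x i j with hX
  set Y : Fin r → Fin d → Fin n → ℂ :=
    fun i j k => (starRingEnd ℂ) (x i j k) with hY
  have hmem : (1:ℝ) ∈ {r : ℝ | ∃ (m : ℕ) (x y : Fin m → Fin d → Fin n → ℂ),
      A = (fun p q => ∑ i, (∏ j, x i j (p j)) * (∏ j, y i j (q j))) ∧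
      r = ∑ i, (∏ j, vnorm (x i j)) * (∏ j, vnorm (y i j))} := by
    refine ⟨r, X, Y, ?_, ?_⟩
    · rw [hA]
      funext a b
      refine Finset.sum_congr rfl fun i _ => ?_
      have hprod : ∏ j, X i j (a j) = (p i : ℂ) * ∏ j, x i j (a j) := by
        have : (fun j => X i j (a j)) =
            fun j => (if j = j0 then (p i : ℂ) else 1) * x i j (a j) := by
          funext j
          by_cases h : j = j0 <;> simp [hX, h]
        rw [this, Finset.prod_mul_distrib]
        congr 1
        simp
      rw [hprod]
      ring
    · have hXn : ∀ i, (∏ j, vnorm (X i j)) = p i := by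
        intro i
        have : (∏ j, vnorm (X i j)) =
            ∏ j, (if j = j0 then p i else 1) := by
          refine Finset.prod_congr rfl fun j _ => ?_
          by_cases h : j = j0
          · simp only [hX, h, if_pos rfl, vnorm_eq_en, en_cmul]
            rw [show ‖(p i : ℂ)‖ = p i by
              rw [Complex.norm_real, Real.norm_eq_abs, abs_of_nonneg (hp0 i)]]
            rw [← vnorm_eq_en, hx1 i j0, mul_one]
            simp
          · simp only [hX, if_neg h, ← vnorm_eq_en, hx1 i j]
        rw [this]
        simp
      have hYn : ∀ i, (∏ j, vnorm (Y i j)) = 1 := by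
        intro i
        refine Finset.prod_eq_one fun j _ => ?_
        rw [hY, vnorm_eq_en, en_conj, ← vnorm_eq_en, hx1 i j]
      rw [eq_comm]
      calc ∑ i, (∏ j, vnorm (X i j)) * (∏ j, vnorm (Y i j))
          = ∑ i, p i := by
            refine Finset.sum_congr rfl fun i _ => ?_
            rw [hXn, hYn, mul_one]
        _ = 1 := hp1
  have hle : nucNorm2 A ≤ 1 := csInf_le ⟨0, nucSet_nonneg A⟩ hmem
  have hge : 1 ≤ nucNorm2 A := by
    refine le_csInf ⟨1, hmem⟩ ?_
    rintro b ⟨m, x', y', hA', rfl⟩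
    exact nuc_mem_ge_one A htr x' y' hA'
  linarith
def Qf {n d : ℕ} (z : Fin d → Fin n → ℂ) : (Fin d → Fin n) → (Fin d → Fin n) → ℂ :=
  fun a b => (∏ j, z j (a j)) * ∏ j, (starRingEnd ℂ) (z j (b j))

def Eset (n d : ℕ) : Set ((Fin d → Fin n) → (Fin d → Fin n) → ℂ) :=
  {B | ∃ z : Fin d → Fin n → ℂ, (∀ j, en (z j) = 1) ∧ B = Qf z}

lemma en_continuous {ι : Type*} [Fintype ι] : Continuous (en (ι := ι)) := by
  unfold en
  fun_prop

lemma isCompact_Eset (n d : ℕ) : IsCompact (Eset n d) := by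
  have hS : IsCompact {v : Fin n → ℂ | en v = 1} := by
    refine IsCompact.of_isClosed_subset (isCompact_closedBall (0 : Fin n → ℂ) 1)
      (isClosed_eq en_continuous continuous_const) ?_
    intro v hv
    rw [Metric.mem_closedBall, dist_zero_right]
    rw [pi_norm_le_iff_of_nonneg zero_le_one]
    intro i
    calc ‖v i‖ ≤ en v := coord_le_en v i
      _ = 1 := hv
  have hK : IsCompact (Set.univ.pi fun _ : Fin d => {v : Fin n → ℂ | en v = 1}) :=
    isCompact_univ_pi fun _ => hS
  have himg : Eset n d = Qf '' (Set.univ.pi fun _ : Fin d => {v : Fin n → ℂ | en v = 1}) := by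
    ext B
    constructor
    · rintro ⟨z, hz, rfl⟩
      exact ⟨z, fun j _ => hz j, rfl⟩
    · rintro ⟨z, hz, rfl⟩
      exact ⟨z, fun j => hz j (Set.mem_univ j), rfl⟩
  rw [himg]
  refine hK.image ?_
  unfold Qf
  refine continuous_pi fun a => continuous_pi fun b => Continuous.mul ?_ ?_
  · exact continuous_finset_prod _ fun j _ => (continuous_apply (a j)).comp (continuous_apply j)
  · refine continuous_finset_prod _ fun j _ => ?_
    exact continuous_star.comp ((continuous_apply (b j)).comp (continuous_apply j))
lemma en_zero_iff' {ι : Type*} [Fintype ι] {x : ι → ℂ} (h : en x = 0) (i : ι) : x i = 0 := by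
  have := coord_le_en x i
  rw [h] at this
  exact norm_le_zero_iff.mp this

lemma approx {n d : ℕ} (hn : 0 < n)
    (A : (Fin d → Fin n) → (Fin d → Fin n) → ℂ) (htr : traceT A = 1)
    {ε : ℝ} (hε0 : 0 < ε) (hε1 : ε ≤ 1) {m : ℕ}
    (x y : Fin m → Fin d → Fin n → ℂ)
    (hA : A = fun p q => ∑ i, (∏ j, x i j (p j)) * (∏ j, y i j (q j)))
    (hval : ∑ i, (∏ j, en (x i j)) * (∏ j, en (y i j)) ≤ 1 + ε) :
    ∃ B ∈ convexHull ℝ (Eset n d), ∀ a b, ‖A a b - B a b‖ ≤ Real.sqrt (3*ε) + 2*ε := by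
  classical
  set X : Fin m → (Fin d → Fin n) → ℂ := fun i p => ∏ j, x i j (p j) with hX
  set Y : Fin m → (Fin d → Fin n) → ℂ := fun i q => ∏ j, y i j (q j) with hY
  set nX : Fin m → ℝ := fun i => ∏ j, en (x i j) with hnX
  set nY : Fin m → ℝ := fun i => ∏ j, en (y i j) with hnY
  set t : Fin m → ℂ := fun i => ∑ p, X i p * Y i p with ht
  set r : Fin m → ℝ := fun i => (t i).re with hr
  set s : Fin m → ℝ := fun i => max (r i) 0 with hs
  have henX : ∀ i, en (X i) = nX i := fun i => en_prodVec (x i)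
  have henY : ∀ i, en (Y i) = nY i := fun i => en_prodVec (y i)
  have hnX0 : ∀ i, 0 ≤ nX i := fun i => Finset.prod_nonneg fun j _ => en_nonneg _
  have hnY0 : ∀ i, 0 ≤ nY i := fun i => Finset.prod_nonneg fun j _ => en_nonneg _
  have hta : ∀ i, ‖t i‖ ≤ nX i * nY i := fun i => by
    rw [← henX, ← henY]; exact abs_dot_le (X i) (Y i)
  have hra : ∀ i, |r i| ≤ nX i * nY i := fun i =>
    le_trans (by simpa using Complex.abs_re_le_norm (t i)) (hta i)
  have hsumt : ∑ i, t i = 1 := by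
    rw [← htr, traceT, hA]
    exact Finset.sum_comm
  have hsumr : ∑ i, r i = 1 := by
    have h := congrArg Complex.re hsumt
    rw [Complex.re_sum] at h
    simpa using h
  -- normalized unit vectors
  set zh : Fin m → Fin d → Fin n → ℂ := fun i j =>
    if _ : en (x i j) = 0 then (fun k => if k = ⟨0, hn⟩ then 1 else 0)
    else fun k => ((en (x i j) : ℝ) : ℂ)⁻¹ * x i j k with hzh
  have hzh1 : ∀ i j, en (zh i j) = 1 := by
    intro i j
    by_cases h : en (x i j) = 0
    · simp only [hzh, dif_pos h]
      unfold en
      rw [show (∑ k : Fin n, ‖if k = ⟨0, hn⟩ then (1:ℂ) else 0‖ ^ 2) = 1 by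
        rw [Finset.sum_eq_single ⟨0, hn⟩]
        · simp
        · intro k _ hk; simp [hk]
        · simp]
      exact Real.sqrt_one
    · simp only [hzh, dif_neg h]
      rw [en_cmul, norm_inv, Complex.norm_real, Real.norm_eq_abs,
        abs_of_nonneg (en_nonneg _), inv_mul_cancel₀ h]
  set Q : Fin m → ((Fin d → Fin n) → (Fin d → Fin n) → ℂ) := fun i => Qf (zh i) with hQdef
  have hQE : ∀ i, Q i ∈ Eset n d := fun i => ⟨zh i, hzh1 i, rfl⟩
  have hQb : ∀ i a b, ‖Q i a b‖ ≤ 1 := by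
    intro i a b
    rw [hQdef]
    unfold Qf
    rw [norm_mul]
    have h1 : ‖∏ j, zh i j (a j)‖ ≤ 1 := by
      have := coord_prodVec_le (zh i) a
      rwa [show (∏ j, en (zh i j)) = 1 from Finset.prod_eq_one fun j _ => hzh1 i j] at this
    have h2 : ‖∏ j, (starRingEnd ℂ) (zh i j (b j))‖ ≤ 1 := by
      have := coord_prodVec_le (fun j k => (starRingEnd ℂ) (zh i j k)) b
      rwa [show (∏ j, en (fun k => (starRingEnd ℂ) (zh i j k))) = 1 from
        Finset.prod_eq_one fun j _ => by rw [en_conj]; exact hzh1 i j] at this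
    calc ‖∏ j, zh i j (a j)‖ * ‖∏ j, (starRingEnd ℂ) (zh i j (b j))‖ ≤ 1 * 1 :=
          mul_le_mul h1 h2 (norm_nonneg _) zero_le_one
      _ = 1 := mul_one 1
  -- key entrywise bound
  have hkey : ∀ i a b, ‖X i a * Y i b - (r i : ℂ) * Q i a b‖ ≤
      Real.sqrt ((nX i * nY i - r i) * (nX i * nY i + r i)) := by
    intro i a b
    by_cases hz : nX i * nY i = 0
    · have ht0 : t i = 0 := by
        rcases mul_eq_zero.mp hz with h | h
        · obtain ⟨j, _, hj⟩ := Finset.prod_eq_zero_iff.mp h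
          have hx0 : ∀ k, x i j k = 0 := en_zero_iff' hj
          have hX0 : ∀ p, X i p = 0 := fun p =>
            Finset.prod_eq_zero (Finset.mem_univ j) (hx0 (p j))
          rw [ht]
          simp only
          exact Finset.sum_eq_zero fun p _ => by rw [hX0 p, zero_mul]
        · obtain ⟨j, _, hj⟩ := Finset.prod_eq_zero_iff.mp h
          have hy0 : ∀ k, y i j k = 0 := en_zero_iff' hj
          have hY0 : ∀ q, Y i q = 0 := fun q =>
            Finset.prod_eq_zero (Finset.mem_univ j) (hy0 (q j))
          rw [ht]
          simp only
          exact Finset.sum_eq_zero fun p _ => by rw [hY0 p, mul_zero]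
      have hr0 : r i = 0 := by rw [hr]; simp only; rw [ht0]; rfl
      have hXY0 : X i a * Y i b = 0 := by
        rcases mul_eq_zero.mp hz with h | h
        · obtain ⟨j, _, hj⟩ := Finset.prod_eq_zero_iff.mp h
          have : X i a = 0 := Finset.prod_eq_zero (Finset.mem_univ j) (en_zero_iff' hj (a j))
          rw [this, zero_mul]
        · obtain ⟨j, _, hj⟩ := Finset.prod_eq_zero_iff.mp h
          have : Y i b = 0 := Finset.prod_eq_zero (Finset.mem_univ j) (en_zero_iff' hj (b j))
          rw [this, mul_zero]
      rw [hXY0, hr0]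
      simp [Real.sqrt_nonneg]
    · obtain ⟨hXne, hYne⟩ := mul_ne_zero_iff.mp hz
      have hXpos : 0 < nX i := lt_of_le_of_ne (hnX0 i) (Ne.symm hXne)
      have hYpos : 0 < nY i := lt_of_le_of_ne (hnY0 i) (Ne.symm hYne)
      have hj : ∀ j, en (x i j) ≠ 0 := fun j =>
        Finset.prod_ne_zero_iff.mp hXne j (Finset.mem_univ j)
      have hzh_eq : ∀ p : Fin d → Fin n, (∏ j, zh i j (p j)) = ((nX i : ℝ) : ℂ)⁻¹ * X i p := by
        intro p
        have h1 : ∀ j, zh i j (p j) = ((en (x i j) : ℝ) : ℂ)⁻¹ * x i j (p j) := by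
          intro j
          rw [hzh]
          simp only [dif_neg (hj j)]
        calc (∏ j, zh i j (p j)) = ∏ j, (((en (x i j) : ℝ) : ℂ)⁻¹ * x i j (p j)) :=
              Finset.prod_congr rfl fun j _ => h1 j
          _ = (∏ j, ((en (x i j) : ℝ) : ℂ)⁻¹) * ∏ j, x i j (p j) := Finset.prod_mul_distrib
          _ = ((nX i : ℝ) : ℂ)⁻¹ * X i p := by
              rw [Finset.prod_inv_distrib, hnX]
              push_cast
              rfl
      have hQ_eq : Q i a b =
          ((nX i : ℝ) : ℂ)⁻¹ * X i a * (((nX i : ℝ) : ℂ)⁻¹ * (starRingEnd ℂ) (X i b)) := by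
        rw [hQdef]
        unfold Qf
        dsimp only
        rw [hzh_eq a]
        have h2 : (∏ j, (starRingEnd ℂ) (zh i j (b j))) = (starRingEnd ℂ) (∏ j, zh i j (b j)) :=
          (map_prod (starRingEnd ℂ) _ _).symm
        rw [h2, hzh_eq b, map_mul]
        rw [show (starRingEnd ℂ) (((nX i : ℝ) : ℂ)⁻¹) = ((nX i : ℝ) : ℂ)⁻¹ by
          rw [map_inv₀, Complex.conj_ofReal]]
      set c : ℝ := r i / (nX i) ^ 2 with hc
      have key_alg : X i a * Y i b - (r i : ℂ) * Q i a b =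
          X i a * (Y i b - (c : ℂ) * (starRingEnd ℂ) (X i b)) := by
        rw [hQ_eq, hc]
        have hXC : ((nX i : ℝ) : ℂ) ≠ 0 := by
          rw [Complex.ofReal_ne_zero]; exact hXne
        push_cast
        field_simp
      set W : (Fin d → Fin n) → ℂ := fun q => Y i q - (c : ℂ) * (starRingEnd ℂ) (X i q) with hW
      have henW : (en W) ^ 2 = nY i ^ 2 - 2 * c * r i + c ^ 2 * nX i ^ 2 := by
        let Y' : EuclideanSpace ℂ (Fin d → Fin n) := WithLp.toLp 2 (Y i)
        let Xc : EuclideanSpace ℂ (Fin d → Fin n) := WithLp.toLp 2 (fun q => (starRingEnd ℂ) (X i q))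
        have hWeq : W = Y' - (c : ℂ) • Xc := by
          funext q
          rfl
        have h1 : en W = ‖Y' - (c : ℂ) • Xc‖ := by rw [en_eq_norm, hWeq]; rfl
        have hinner : (inner ℂ Y' Xc : ℂ) = (starRingEnd ℂ) (t i) := by
          rw [PiLp.inner_apply]
          simp only [RCLike.inner_apply', Y', Xc, WithLp.ofLp_toLp]
          rw [ht]
          simp only
          rw [map_sum]
          refine Finset.sum_congr rfl fun p _ => ?_
          rw [map_mul]
          ring
        have h2 : (inner ℂ Y' ((c : ℂ) • Xc) : ℂ) = (c : ℂ) * (starRingEnd ℂ) (t i) := by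
          rw [inner_smul_right, hinner]
        have h3 : RCLike.re (inner ℂ Y' ((c : ℂ) • Xc) : ℂ) = c * r i := by
          rw [h2]
          simp [Complex.mul_re, Complex.conj_re, Complex.conj_im, hr]
        have h4 : ‖Y'‖ = nY i := by rw [en_eq_norm]; exact henY i
        have h5 : ‖(c : ℂ) • Xc‖ = |c| * nX i := by
          rw [norm_smul, Complex.norm_real, Real.norm_eq_abs]
          congr 1
          rw [en_eq_norm]
          show en (fun q => (starRingEnd ℂ) (X i q)) = nX i
          rw [en_conj]
          exact henX i
        rw [h1, norm_sub_sq (𝕜 := ℂ), h3, h4, h5]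
        rw [mul_pow, sq_abs]
        ring
      have hbound : ‖X i a * W b‖ ≤ nX i * en W := by
        rw [norm_mul]
        have h1 : ‖X i a‖ ≤ nX i := by
          rw [← henX]; exact coord_le_en (X i) a
        have h2 : ‖W b‖ ≤ en W := coord_le_en W b
        exact mul_le_mul h1 h2 (norm_nonneg _) (hnX0 i)
      have hfinal : nX i * en W = Real.sqrt ((nX i * nY i - r i) * (nX i * nY i + r i)) := by
        have h1 : nX i * en W = Real.sqrt ((nX i) ^ 2 * (en W) ^ 2) := by
          rw [Real.sqrt_mul (sq_nonneg _), Real.sqrt_sq (hnX0 i), Real.sqrt_sq (en_nonneg _)]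
        rw [h1, henW]
        congr 1
        rw [hc]
        field_simp
        ring
      calc ‖X i a * Y i b - (r i : ℂ) * Q i a b‖ = ‖X i a * W b‖ := by rw [key_alg]
        _ ≤ nX i * en W := hbound
        _ = _ := hfinal
  -- assembly
  set Ssum : ℝ := ∑ i, s i with hSsum
  have hsr : ∀ i, r i ≤ s i := fun i => le_max_left _ _
  have hs0 : ∀ i, 0 ≤ s i := fun i => le_max_right _ _
  have hS1 : 1 ≤ Ssum := by
    rw [hSsum, ← hsumr]
    exact Finset.sum_le_sum fun i _ => hsr i
  have hSpos : 0 < Ssum := lt_of_lt_of_le one_pos hS1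
  have hsle : ∀ i, s i ≤ nX i * nY i := fun i =>
    max_le (le_trans (le_abs_self _) (hra i)) (mul_nonneg (hnX0 i) (hnY0 i))
  have hvle : (∑ i, nX i * nY i) ≤ 1 + ε := hval
  have hSsum_le : Ssum - 1 ≤ ε := by
    have h1 : Ssum - 1 = ∑ i, (s i - r i) := by
      rw [Finset.sum_sub_distrib, hsumr, hSsum]
    have h2 : (∑ i, (s i - r i)) ≤ ∑ i, (nX i * nY i - r i) :=
      Finset.sum_le_sum fun i _ => by have := hsle i; linarith
    have h3 : (∑ i, (nX i * nY i - r i)) = (∑ i, nX i * nY i) - 1 := by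
      rw [Finset.sum_sub_distrib, hsumr]
    linarith
  have hE1 : (∑ i, Real.sqrt ((nX i * nY i - r i) * (nX i * nY i + r i))) ≤
      Real.sqrt (3 * ε) := by
    have hu0 : ∀ i, 0 ≤ nX i * nY i - r i := fun i => by
      have h := (abs_le.mp (hra i)).2; linarith
    have hv0 : ∀ i, 0 ≤ nX i * nY i + r i := fun i => by
      have h := (abs_le.mp (hra i)).1; linarith
    have hsumu : (∑ i, (nX i * nY i - r i)) ≤ ε := by
      rw [Finset.sum_sub_distrib, hsumr]; linarith
    have hsumv : (∑ i, (nX i * nY i + r i)) ≤ 3 := by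
      rw [Finset.sum_add_distrib, hsumr]; linarith
    have hsum0 : 0 ≤ ∑ i, Real.sqrt ((nX i * nY i - r i) * (nX i * nY i + r i)) :=
      Finset.sum_nonneg fun i _ => Real.sqrt_nonneg _
    rw [Real.le_sqrt hsum0 (by positivity)]
    have hCS := Finset.sum_mul_sq_le_sq_mul_sq univ
      (fun i => Real.sqrt (nX i * nY i - r i)) (fun i => Real.sqrt (nX i * nY i + r i))
    have hrw : (∑ i, Real.sqrt ((nX i * nY i - r i) * (nX i * nY i + r i))) =
        ∑ i, Real.sqrt (nX i * nY i - r i) * Real.sqrt (nX i * nY i + r i) :=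
      Finset.sum_congr rfl fun i _ => Real.sqrt_mul (hu0 i) _
    rw [hrw]
    have h1 : (∑ i, Real.sqrt (nX i * nY i - r i) ^ 2) = ∑ i, (nX i * nY i - r i) :=
      Finset.sum_congr rfl fun i _ => Real.sq_sqrt (hu0 i)
    have h2 : (∑ i, Real.sqrt (nX i * nY i + r i) ^ 2) = ∑ i, (nX i * nY i + r i) :=
      Finset.sum_congr rfl fun i _ => Real.sq_sqrt (hv0 i)
    rw [h1, h2] at hCS
    have hsumu0 : 0 ≤ ∑ i, (nX i * nY i - r i) := Finset.sum_nonneg fun i _ => hu0 i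
    calc (∑ i, Real.sqrt (nX i * nY i - r i) * Real.sqrt (nX i * nY i + r i)) ^ 2
        ≤ (∑ i, (nX i * nY i - r i)) * (∑ i, (nX i * nY i + r i)) := hCS
      _ ≤ ε * 3 := by
          refine mul_le_mul hsumu hsumv (Finset.sum_nonneg fun i _ => hv0 i) (le_of_lt hε0)
      _ = 3 * ε := by ring
  set B : (Fin d → Fin n) → (Fin d → Fin n) → ℂ :=
    fun a b => ∑ i, ((s i / Ssum : ℝ) : ℂ) * Q i a b with hB
  have hBmem : B ∈ convexHull ℝ (Eset n d) := by
    have hw0 : ∀ i ∈ (univ : Finset (Fin m)), 0 ≤ s i / Ssum := fun i _ =>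
      div_nonneg (hs0 i) (le_of_lt hSpos)
    have hw1 : (∑ i, s i / Ssum) = 1 := by
      rw [← Finset.sum_div, ← hSsum]; exact div_self (ne_of_gt hSpos)
    have hmem := Finset.centerMass_mem_convexHull (univ : Finset (Fin m)) hw0
      (by rw [hw1]; exact one_pos) (fun i _ => hQE i)
    have hcm : (univ : Finset (Fin m)).centerMass (fun i => s i / Ssum) Q = B := by
      rw [Finset.centerMass, hw1, inv_one, one_smul]
      funext a b
      rw [Finset.sum_apply, Finset.sum_apply]
      exact Finset.sum_congr rfl fun i _ => by
        rw [Pi.smul_apply, Pi.smul_apply, Complex.real_smul]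
    rwa [hcm] at hmem
  refine ⟨B, hBmem, fun a b => ?_⟩
  have hsplit_entry : A a b - B a b = ∑ i, ((X i a * Y i b - (r i : ℂ) * Q i a b)
      + ((r i - s i : ℝ) : ℂ) * Q i a b + ((s i - s i / Ssum : ℝ) : ℂ) * Q i a b) := by
    rw [hA, hB]
    dsimp only
    rw [← Finset.sum_sub_distrib]
    refine Finset.sum_congr rfl fun i _ => ?_
    push_cast
    ring
  rw [hsplit_entry]
  have hterm : ∀ i, ‖(X i a * Y i b - (r i : ℂ) * Q i a b)
      + ((r i - s i : ℝ) : ℂ) * Q i a b + ((s i - s i / Ssum : ℝ) : ℂ) * Q i a b‖ ≤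
      Real.sqrt ((nX i * nY i - r i) * (nX i * nY i + r i)) + (s i - r i)
        + (s i - s i / Ssum) := by
    intro i
    have hd1 : s i / Ssum ≤ s i := div_le_self (hs0 i) hS1
    refine le_trans (norm_add_le _ _) ?_
    refine add_le_add (le_trans (norm_add_le _ _) (add_le_add (hkey i a b) ?_)) ?_
    · rw [norm_mul, Complex.norm_real, Real.norm_eq_abs,
        abs_of_nonpos (by have := hsr i; linarith)]
      calc -(r i - s i) * ‖Q i a b‖ ≤ (s i - r i) * 1 := by
            refine mul_le_mul (by linarith) (hQb i a b) (norm_nonneg _) (by have := hsr i; linarith)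
        _ = s i - r i := mul_one _
    · rw [norm_mul, Complex.norm_real, Real.norm_eq_abs, abs_of_nonneg (by linarith)]
      calc (s i - s i / Ssum) * ‖Q i a b‖ ≤ (s i - s i / Ssum) * 1 :=
            mul_le_mul_of_nonneg_left (hQb i a b) (by linarith)
        _ = s i - s i / Ssum := mul_one _
  calc ‖∑ i, ((X i a * Y i b - (r i : ℂ) * Q i a b)
      + ((r i - s i : ℝ) : ℂ) * Q i a b + ((s i - s i / Ssum : ℝ) : ℂ) * Q i a b)‖
      ≤ ∑ i, (Real.sqrt ((nX i * nY i - r i) * (nX i * nY i + r i)) + (s i - r i)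
        + (s i - s i / Ssum)) :=
        le_trans (norm_sum_le _ _) (Finset.sum_le_sum fun i _ => hterm i)
    _ = (∑ i, Real.sqrt ((nX i * nY i - r i) * (nX i * nY i + r i)))
        + (∑ i, (s i - r i)) + (∑ i, (s i - s i / Ssum)) := by
        rw [Finset.sum_add_distrib, Finset.sum_add_distrib]
    _ ≤ Real.sqrt (3 * ε) + ε + ε := by
        have h2 : (∑ i, (s i - r i)) = Ssum - 1 := by
          rw [Finset.sum_sub_distrib, hsumr, hSsum]
        have h3 : (∑ i, (s i - s i / Ssum)) = Ssum - 1 := by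
          rw [Finset.sum_sub_distrib, ← Finset.sum_div, ← hSsum,
            div_self (ne_of_gt hSpos)]
        rw [h2, h3]
        have := hSsum_le
        have := hE1
        linarith
    _ = Real.sqrt (3 * ε) + 2 * ε := by ring
lemma mem_hull {n d : ℕ} (hn : 0 < n)
    (A : (Fin d → Fin n) → (Fin d → Fin n) → ℂ) (htr : traceT A = 1)
    (hnuc : nucNorm2 A = 1) : A ∈ convexHull ℝ (Eset n d) := by
  have hclosed : IsClosed (convexHull ℝ (Eset n d)) :=
    (isCompact_convexHull_of_isCompact (isCompact_Eset n d)).isClosed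
  rw [← hclosed.closure_eq]
  rw [Metric.mem_closure_iff]
  intro δ hδ
  set ε : ℝ := min 1 (δ ^ 2 / 32) with hε
  have hε0 : 0 < ε := lt_min one_pos (by positivity)
  have hε1 : ε ≤ 1 := min_le_left _ _
  have hεδ : ε ≤ δ ^ 2 / 32 := min_le_right _ _
  set nset := {r : ℝ | ∃ (m : ℕ) (x y : Fin m → Fin d → Fin n → ℂ),
    A = (fun p q => ∑ i, (∏ j, x i j (p j)) * (∏ j, y i j (q j))) ∧
    r = ∑ i, (∏ j, vnorm (x i j)) * (∏ j, vnorm (y i j))} with hnset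
  have hne : nset.Nonempty := by
    by_contra h
    rw [Set.not_nonempty_iff_eq_empty] at h
    rw [nucNorm2, ← hnset, h, Real.sInf_empty] at hnuc
    norm_num at hnuc
  obtain ⟨rr, hrr, hlt⟩ := Real.lt_sInf_add_pos hne hε0
  rw [show sInf nset = 1 from hnuc] at hlt
  obtain ⟨m, x, y, hAd, rfl⟩ := hrr
  have hval : (∑ i, (∏ j, en (x i j)) * (∏ j, en (y i j))) ≤ 1 + ε := le_of_lt hlt
  obtain ⟨B, hB, hbound⟩ := approx hn A htr hε0 hε1 x y hAd hval
  refine ⟨B, hB, ?_⟩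
  have hquant : Real.sqrt (3 * ε) + 2 * ε < δ := by
    have hs0 : 0 ≤ Real.sqrt (3 * ε) := Real.sqrt_nonneg _
    have hs2 : Real.sqrt (3 * ε) ^ 2 = 3 * ε := Real.sq_sqrt (by positivity)
    rcases le_or_gt δ 4 with h4 | h4
    · nlinarith [sq_nonneg (Real.sqrt (3 * ε) - 5 * δ / 16), sq_nonneg δ, hδ]
    · nlinarith [sq_nonneg (Real.sqrt (3 * ε) - 2)]
  have hdist : dist A B ≤ Real.sqrt (3 * ε) + 2 * ε := by
    rw [dist_pi_le_iff (by positivity)]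
    intro a
    rw [dist_pi_le_iff (by positivity)]
    intro b
    rw [Complex.dist_eq]
    exact hbound a b
  exact lt_of_le_of_lt hdist hquant

lemma hull_structure {n d : ℕ}
    (A : (Fin d → Fin n) → (Fin d → Fin n) → ℂ) (hA : A ∈ convexHull ℝ (Eset n d)) :
    ∃ (R : ℕ) (w : Fin R → ℝ) (ζ : Fin R → Fin d → Fin n → ℂ),
      (∀ i, 0 < w i) ∧ (∑ i, w i) = 1 ∧ (∀ i j, en (ζ i j) = 1) ∧
      ∀ a b, A a b = ∑ i, (w i : ℂ) * Qf (ζ i) a b := by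
  obtain ⟨ι, hft, z, w, hrange, -, hw, hw1, hsum⟩ := eq_pos_convex_span_of_mem_convexHull hA
  letI := hft
  let e := Fintype.equivFin ι
  have hzmem : ∀ i : ι, z i ∈ Eset n d := fun i => hrange (Set.mem_range_self i)
  choose ζ hζ hzeq using hzmem
  refine ⟨Fintype.card ι, fun i' => w (e.symm i'), fun i' => ζ (e.symm i'),
    fun i' => hw _, ?_, fun i' => hζ _, fun a b => ?_⟩
  · rw [Equiv.sum_comp e.symm w]
    exact hw1
  · have h1 : A a b = ∑ i : ι, (w i : ℂ) * Qf (ζ i) a b := by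
      rw [← hsum]
      rw [Finset.sum_apply, Finset.sum_apply]
      refine Finset.sum_congr rfl fun i _ => ?_
      rw [Pi.smul_apply, Pi.smul_apply, Complex.real_smul, hzeq i]
    rw [h1, ← Equiv.sum_comp e.symm (fun i : ι => (w i : ℂ) * Qf (ζ i) a b)]
def permEquiv {d n : ℕ} (σ : Equiv.Perm (Fin d)) : (Fin d → Fin n) ≃ (Fin d → Fin n) where
  toFun p := fun j => p (σ j)
  invFun p := fun j => p (σ.symm j)
  left_inv p := by funext j; simp
  right_inv p := by funext j; simp

lemma norm_sub_sq_complex (u v : ℂ) :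
    ‖u - v‖ ^ 2 = ‖u‖ ^ 2 + ‖v‖ ^ 2 - 2 * (u * (starRingEnd ℂ) v).re := by
  simp only [Complex.sq_norm, Complex.normSq_apply, Complex.sub_re,
    Complex.sub_im, Complex.mul_re, Complex.mul_im, Complex.conj_re, Complex.conj_im]
  ring

lemma sym_vectors {n d : ℕ}
    (A : (Fin d → Fin n) → (Fin d → Fin n) → ℂ) (hbi : IsBisymT A) (htr : traceT A = 1)
    {R : ℕ} (w : Fin R → ℝ) (ζ : Fin R → Fin d → Fin n → ℂ)
    (hw : ∀ i, 0 < w i) (hw1 : (∑ i, w i) = 1) (hζ : ∀ i j, en (ζ i j) = 1)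
    (hAeq : ∀ a b, A a b = ∑ i, (w i : ℂ) * Qf (ζ i) a b)
    (σ : Equiv.Perm (Fin d)) (i : Fin R) (p : Fin d → Fin n) :
    (∏ j, ζ i j (p (σ j))) = ∏ j, ζ i j (p j) := by
  classical
  set Z : Fin R → (Fin d → Fin n) → ℂ := fun i p => ∏ j, ζ i j (p j) with hZ
  have hZ1 : ∀ i, (∑ p, ‖Z i p‖ ^ 2) = 1 := by
    intro i
    have h1 : en (Z i) = 1 := by
      rw [hZ]
      rw [en_prodVec (ζ i)]
      exact Finset.prod_eq_one fun j _ => hζ i j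
    have h2 : en (Z i) ^ 2 = 1 := by rw [h1]; norm_num
    rwa [en_sq] at h2
  have hZσ1 : ∀ i, (∑ p : Fin d → Fin n, ‖Z i (fun j => p (σ j))‖ ^ 2) = 1 := by
    intro i
    rw [show (∑ p : Fin d → Fin n, ‖Z i (fun j => p (σ j))‖ ^ 2) = ∑ p, ‖Z i p‖ ^ 2 from
      Equiv.sum_comp (permEquiv σ) (fun p => ‖Z i p‖ ^ 2)]
    exact hZ1 i
  have hQf : ∀ i a b, Qf (ζ i) a b = Z i a * (starRingEnd ℂ) (Z i b) := by
    intro i a b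
    unfold Qf
    rw [hZ]
    simp only
    rw [map_prod]
  -- trace identity along σ
  have htrσ : (∑ p, A (fun j => p (σ j)) p) = 1 := by
    rw [← htr, traceT]
    refine Finset.sum_congr rfl fun p _ => ?_
    have h := hbi σ 1 p p
    have h1 : p ∘ ⇑(1 : Equiv.Perm (Fin d)) = p := by funext j; simp
    rw [h1] at h
    exact h
  have hcross : (∑ i, w i * (∑ p, (Z i (fun j => p (σ j)) * (starRingEnd ℂ) (Z i p)).re)) = 1 := by
    have h1 : (∑ p : Fin d → Fin n, A (fun j => p (σ j)) p) =
        ∑ i, (w i : ℂ) * ∑ p : Fin d → Fin n, Z i (fun j => p (σ j)) * (starRingEnd ℂ) (Z i p) := by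
      rw [show (∑ p : Fin d → Fin n, A (fun j => p (σ j)) p) =
          ∑ p : Fin d → Fin n, ∑ i, (w i : ℂ) * Qf (ζ i) (fun j => p (σ j)) p from
        Finset.sum_congr rfl fun p _ => hAeq _ p]
      rw [Finset.sum_comm]
      refine Finset.sum_congr rfl fun i _ => ?_
      rw [Finset.mul_sum]
      exact Finset.sum_congr rfl fun p _ => by rw [hQf]
    have h1' : (∑ i, (w i : ℂ) *
        ∑ p : Fin d → Fin n, Z i (fun j => p (σ j)) * (starRingEnd ℂ) (Z i p)) = 1 := by
      rw [← h1]; exact htrσ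
    have h2 := congrArg Complex.re h1'
    rw [Complex.re_sum, Complex.one_re] at h2
    rw [← h2]
    refine Finset.sum_congr rfl fun i _ => ?_
    rw [Complex.mul_re, Complex.ofReal_re, Complex.ofReal_im, zero_mul, sub_zero, Complex.re_sum]
  -- total discrepancy is 0
  have hT : (∑ i, w i * (∑ p, ‖Z i (fun j => p (σ j)) - Z i p‖ ^ 2)) = 0 := by
    have hexp : ∀ i, (∑ p, ‖Z i (fun j => p (σ j)) - Z i p‖ ^ 2) =
        2 - 2 * (∑ p, (Z i (fun j => p (σ j)) * (starRingEnd ℂ) (Z i p)).re) := by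
      intro i
      rw [show (∑ p, ‖Z i (fun j => p (σ j)) - Z i p‖ ^ 2) =
          ∑ p, (‖Z i (fun j => p (σ j))‖ ^ 2 + ‖Z i p‖ ^ 2
            - 2 * (Z i (fun j => p (σ j)) * (starRingEnd ℂ) (Z i p)).re) from
        Finset.sum_congr rfl fun p _ => norm_sub_sq_complex _ _]
      rw [Finset.sum_sub_distrib, Finset.sum_add_distrib, hZ1 i, hZσ1 i, ← Finset.mul_sum]
      ring
    rw [show (∑ i, w i * (∑ p, ‖Z i (fun j => p (σ j)) - Z i p‖ ^ 2)) =
        ∑ i, (2 * w i - 2 * (w i * (∑ p, (Z i (fun j => p (σ j)) *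
          (starRingEnd ℂ) (Z i p)).re))) from
      Finset.sum_congr rfl fun i _ => by rw [hexp i]; ring]
    rw [Finset.sum_sub_distrib, ← Finset.mul_sum, ← Finset.mul_sum, hw1, hcross]
    ring
  -- conclude for our i and p
  have hterm : w i * (∑ p, ‖Z i (fun j => p (σ j)) - Z i p‖ ^ 2) = 0 := by
    have hnn : ∀ k ∈ (Finset.univ : Finset (Fin R)),
        0 ≤ w k * (∑ p, ‖Z k (fun j => p (σ j)) - Z k p‖ ^ 2) := fun k _ =>
      mul_nonneg (hw k).le (Finset.sum_nonneg fun p _ => sq_nonneg _)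
    exact (Finset.sum_eq_zero_iff_of_nonneg hnn).mp hT i (Finset.mem_univ i)
  have hsum0 : (∑ p, ‖Z i (fun j => p (σ j)) - Z i p‖ ^ 2) = 0 := by
    rcases mul_eq_zero.mp hterm with h | h
    · exact absurd h (ne_of_gt (hw i))
    · exact h
  have hp0 : ‖Z i (fun j => p (σ j)) - Z i p‖ ^ 2 = 0 :=
    (Finset.sum_eq_zero_iff_of_nonneg fun p _ => sq_nonneg _).mp hsum0 p (Finset.mem_univ p)
  have : Z i (fun j => p (σ j)) - Z i p = 0 := by
    rwa [pow_eq_zero_iff (by norm_num), norm_eq_zero] at hp0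
  have := sub_eq_zero.mp this
  rw [hZ] at this
  exact this

lemma collapse {n d : ℕ} (hd : 0 < d) (ζ : Fin d → Fin n → ℂ)
    (hnorm : ∀ j, en (ζ j) = 1)
    (hsym : ∀ (σ : Equiv.Perm (Fin d)) (p : Fin d → Fin n),
      (∏ j, ζ j (p (σ j))) = ∏ j, ζ j (p j)) :
    ∃ v : Fin n → ℂ, en v = 1 ∧ ∀ a b : Fin d → Fin n,
      Qf ζ a b = (∏ j, v (a j)) * ∏ j, (starRingEnd ℂ) (v (b j)) := by
  classical
  set j0 : Fin d := ⟨0, hd⟩ with hj0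
  set v : Fin n → ℂ := ζ j0 with hv
  have hnz : ∀ j, ∃ k, ζ j k ≠ 0 := by
    intro j
    by_contra h
    push_neg at h
    have : en (ζ j) = 0 := by
      unfold en
      rw [show (∑ k, ‖ζ j k‖ ^ 2) = 0 from Finset.sum_eq_zero fun k _ => by
        rw [h k]; simp]
      exact Real.sqrt_zero
    rw [hnorm j] at this
    norm_num at this
  choose κ hκ using hnz
  have pairwise : ∀ (j : Fin d) (k l : Fin n), ζ j0 k * ζ j l = ζ j0 l * ζ j k := by
    intro j k l
    by_cases hjj : j = j0
    · subst hjj; ring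
    · set σ := Equiv.swap j0 j with hσ
      set p : Fin d → Fin n := fun j' => if j' = j0 then k else if j' = j then l else κ j' with hp
      have hkey := hsym σ p
      have hj0mem : j0 ∈ (Finset.univ : Finset (Fin d)) := Finset.mem_univ _
      have hjmem : j ∈ (Finset.univ.erase j0) :=
        Finset.mem_erase.mpr ⟨hjj, Finset.mem_univ _⟩
      -- LHS
      have hL : (∏ j', ζ j' (p (σ j'))) =
          ζ j0 l * (ζ j k * ∏ j' ∈ (Finset.univ.erase j0).erase j, ζ j' (p (σ j'))) := by
        rw [← Finset.mul_prod_erase Finset.univ _ hj0mem,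
          ← Finset.mul_prod_erase _ _ hjmem]
        have e1 : ζ j0 (p (σ j0)) = ζ j0 l := by
          rw [hσ, Equiv.swap_apply_left, hp]
          simp [hjj]
        have e2 : ζ j (p (σ j)) = ζ j k := by
          rw [hσ, Equiv.swap_apply_right, hp]
          simp
        rw [e1, e2]
      have hR : (∏ j', ζ j' (p j')) =
          ζ j0 k * (ζ j l * ∏ j' ∈ (Finset.univ.erase j0).erase j, ζ j' (p j')) := by
        rw [← Finset.mul_prod_erase Finset.univ _ hj0mem,
          ← Finset.mul_prod_erase _ _ hjmem]
        have e1 : ζ j0 (p j0) = ζ j0 k := by rw [hp]; simp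
        have e2 : ζ j (p j) = ζ j l := by rw [hp]; simp [hjj]
        rw [e1, e2]
      have hC : (∏ j' ∈ (Finset.univ.erase j0).erase j, ζ j' (p (σ j'))) =
          ∏ j' ∈ (Finset.univ.erase j0).erase j, ζ j' (p j') := by
        refine Finset.prod_congr rfl fun j' hj' => ?_
        have h1 : j' ≠ j := (Finset.mem_erase.mp hj').1
        have h2 : j' ≠ j0 := (Finset.mem_erase.mp (Finset.mem_erase.mp hj').2).1
        rw [hσ, Equiv.swap_apply_of_ne_of_ne h2 h1]
      have hCne : (∏ j' ∈ (Finset.univ.erase j0).erase j, ζ j' (p j')) ≠ 0 := by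
        rw [Finset.prod_ne_zero_iff]
        intro j' hj'
        have h1 : j' ≠ j := (Finset.mem_erase.mp hj').1
        have h2 : j' ≠ j0 := (Finset.mem_erase.mp (Finset.mem_erase.mp hj').2).1
        rw [hp]
        simp only [if_neg h2, if_neg h1]
        exact hκ j'
      rw [hL, hC, hR] at hkey
      have : ζ j0 l * ζ j k * (∏ j' ∈ (Finset.univ.erase j0).erase j, ζ j' (p j')) =
          ζ j0 k * ζ j l * (∏ j' ∈ (Finset.univ.erase j0).erase j, ζ j' (p j')) := by
        rw [mul_assoc, mul_assoc]
        exact hkey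
      have := mul_right_cancel₀ hCne this
      exact this.symm
  set k0 : Fin n := κ j0 with hk0
  have hvk0 : v k0 ≠ 0 := hκ j0
  set lam : Fin d → ℂ := fun j => ζ j k0 / v k0 with hlam
  have hprop : ∀ j k, ζ j k = lam j * v k := by
    intro j k
    have h := pairwise j k0 k
    rw [hlam]
    simp only
    rw [div_mul_eq_mul_div, eq_div_iff hvk0]
    rw [hv]
    linear_combination h
  have hlam1 : ∀ j, ‖lam j‖ = 1 := by
    intro j
    have h1 : en (ζ j) = ‖lam j‖ * en v := by
      rw [show ζ j = fun k => lam j * v k from funext fun k => hprop j k]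
      exact en_cmul (lam j) v
    rw [hnorm j, hv, hnorm j0, mul_one] at h1
    exact h1.symm
  refine ⟨v, hnorm j0, fun a b => ?_⟩
  have ha : (∏ j, ζ j (a j)) = (∏ j, lam j) * ∏ j, v (a j) := by
    rw [show (∏ j, ζ j (a j)) = ∏ j, (lam j * v (a j)) from
      Finset.prod_congr rfl fun j _ => hprop j (a j), Finset.prod_mul_distrib]
  have hb : (∏ j, (starRingEnd ℂ) (ζ j (b j))) =
      (starRingEnd ℂ) (∏ j, lam j) * ∏ j, (starRingEnd ℂ) (v (b j)) := by
    rw [show (∏ j, (starRingEnd ℂ) (ζ j (b j))) = ∏ j, (starRingEnd ℂ) (lam j * v (b j)) from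
      Finset.prod_congr rfl fun j _ => by rw [hprop j (b j)]]
    rw [show (∏ j, (starRingEnd ℂ) (lam j * v (b j))) =
      (starRingEnd ℂ) (∏ j, (lam j * v (b j))) from (map_prod _ _ _).symm]
    rw [Finset.prod_mul_distrib, map_mul, map_prod, map_prod]
  have hlamprod : (∏ j, lam j) * (starRingEnd ℂ) (∏ j, lam j) = 1 := by
    rw [Complex.mul_conj]
    rw [Complex.normSq_eq_norm_sq, norm_prod]
    rw [show (∏ j, ‖lam j‖) = 1 from Finset.prod_eq_one fun j _ => hlam1 j]
    norm_num
  unfold Qf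
  rw [ha, hb]
  calc (∏ j, lam j) * (∏ j, v (a j)) *
        ((starRingEnd ℂ) (∏ j, lam j) * ∏ j, (starRingEnd ℂ) (v (b j)))
      = ((∏ j, lam j) * (starRingEnd ℂ) (∏ j, lam j)) *
        ((∏ j, v (a j)) * ∏ j, (starRingEnd ℂ) (v (b j))) := by ring
    _ = (∏ j, v (a j)) * ∏ j, (starRingEnd ℂ) (v (b j)) := by rw [hlamprod, one_mul]

lemma main_three {n d : ℕ} (hn : 0 < n) (hd : 0 < d)
    (A : (Fin d → Fin n) → (Fin d → Fin n) → ℂ)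
    (hbi : IsBisymT A) (htr : traceT A = 1) (hnuc : nucNorm2 A = 1) :
    ∃ (r : ℕ) (p : Fin r → ℝ) (x : Fin r → Fin n → ℂ),
      (∀ i, vnorm (x i) = 1) ∧ (∀ i, 0 < p i) ∧ (∑ i, p i) = 1 ∧
      A = fun a b => ∑ i, (p i : ℂ) *
        ((∏ j, x i (a j)) * ∏ j, (starRingEnd ℂ) (x i (b j))) := by
  obtain ⟨R, w, ζ, hw, hw1, hζ, hAeq⟩ := hull_structure A (mem_hull hn A htr hnuc)
  choose v hv1 hv2 using fun i => collapse hd (ζ i) (hζ i)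
    (fun σ p => sym_vectors A hbi htr w ζ hw hw1 hζ hAeq σ i p)
  refine ⟨R, w, v, fun i => (vnorm_eq_en (v i)).trans (hv1 i), hw, hw1, ?_⟩
  funext a b
  rw [hAeq a b]
  refine Finset.sum_congr rfl fun i _ => ?_
  rw [hv2 i a b]

/-- For a hermitian bisymmetric density tensor `A` on `ℂ^n`, the
following are equivalent: `A` is separable; `‖A‖₁ = 1`; `A` has a separable decomposition
into symmetric pure product states `A = ∑ᵢ pᵢ (⊗^d xᵢ)⊗(⊗^d conj xᵢ)` with `pᵢ > 0`. -/
theorem stmt12 (n d : ℕ) (hn : 2 ≤ n) (hd : 2 ≤ d)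
    (A : (Fin d → Fin n) → (Fin d → Fin n) → ℂ)
    (hherm : IsHermT A) (hbi : IsBisymT A) (hden : IsDensity A) :
    (Separable A ↔ nucNorm2 A = 1) ∧
    (nucNorm2 A = 1 ↔
      ∃ (r : ℕ) (p : Fin r → ℝ) (x : Fin r → Fin n → ℂ),
        (∀ i, vnorm (x i) = 1) ∧ (∀ i, 0 < p i) ∧ (∑ i, p i) = 1 ∧
        A = fun a b => ∑ i, (p i : ℂ) *
          ((∏ j, x i (a j)) * ∏ j, (starRingEnd ℂ) (x i (b j)))) := by
  have htr : traceT A = 1 := hden.2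
  have hn0 : 0 < n := by omega
  have hd0 : 0 < d := by omega
  have hd1 : 1 ≤ d := by omega
  have hthree := main_three hn0 hd0 A hbi htr
  have hsep_of_three : (∃ (r : ℕ) (p : Fin r → ℝ) (x : Fin r → Fin n → ℂ),
      (∀ i, vnorm (x i) = 1) ∧ (∀ i, 0 < p i) ∧ (∑ i, p i) = 1 ∧
      A = fun a b => ∑ i, (p i : ℂ) *
        ((∏ j, x i (a j)) * ∏ j, (starRingEnd ℂ) (x i (b j)))) → Separable A := by
    rintro ⟨R, p, x, h1, h2, h3, h4⟩
    exact ⟨R, p, fun i _ => x i, fun i _ => h1 i, fun i => (h2 i).le, h3, by rw [h4]⟩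
  constructor
  · constructor
    · intro hsep
      exact sep_nuc hd1 A hsep htr
    · intro hnuc
      exact hsep_of_three (hthree hnuc)
  · constructor
    · exact hthree
    · intro h
      exact sep_nuc hd1 A (hsep_of_three h) htr
end
end
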